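/- arXiv:1807.06164 — 6 statements merged into one kernel-verified Lean document; each statement's English description precedes it below -/
import Mathlib

section
/- Let a : [0,∞) → ℝ be continuous and nonnegative, λ > 0, s ≥ 0, and let y₁ solve y₁'' + a(t) y₁' − λ² y₁ = 0 on [s,∞) with y₁(s) = 1, y₁'(s) = 0. Then y₁(t) > 0 and y₁'(t) ≥ 0 for all t ≥ s. -/
open Set Real MeasureTheory intervalIntegral

theorem y1_pos_y1d_nonneg (a : ℝ → ℝ) (ha : ContinuousOn a (Ici 0))
    (ha0 : ∀ t ∈ Ici (0:ℝ), 0 ≤ a t)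
    (lam : ℝ) (hlam : 0 < lam) (s : ℝ) (hs : 0 ≤ s)
    (y1 y1d y1dd : ℝ → ℝ)
    (hy1 : ∀ t ∈ Ici s, HasDerivAt y1 (y1d t) t)
    (hy1d : ∀ t ∈ Ici s, HasDerivAt y1d (y1dd t) t)
    (hy1dd : ContinuousOn y1dd (Ici s))
    (hode : ∀ t ∈ Ici s, y1dd t + a t * y1d t - lam ^ 2 * y1 t = 0)
    (hinit : y1 s = 1) (hinit' : y1d s = 0) :
    ∀ t ∈ Ici s, 0 < y1 t ∧ 0 ≤ y1d t := by
  by_contra hcon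
  push_neg at hcon
  obtain ⟨t, htmem, hprop⟩ := hcon
  set B : Set ℝ := {t | s ≤ t ∧ (y1 t ≤ 0 ∨ y1d t < 0)} with hBdef
  have hBne : B.Nonempty := by
    refine ⟨t, htmem, ?_⟩
    by_cases h : 0 < y1 t
    · exact Or.inr (hprop h)
    · exact Or.inl (not_lt.mp h)
  have hBbd : BddBelow B := ⟨s, fun x hx => hx.1⟩
  set t0 := sInf B with ht0def
  have ht0s : s ≤ t0 := le_csInf hBne (fun x hx => hx.1)
  have hgood : ∀ r, s ≤ r → r < t0 → 0 < y1 r ∧ 0 ≤ y1d r := by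
    intro r hr hrt
    by_contra h
    rw [not_and_or, not_lt, not_le] at h
    exact absurd (csInf_le hBbd ⟨hr, h⟩) (not_le.mpr hrt)
  have hy1t0 : 0 < y1 t0 := by
    rcases eq_or_lt_of_le ht0s with heq | hlt
    · rw [← heq, hinit]; norm_num
    · have hmono : MonotoneOn y1 (Icc s t0) := by
        apply monotoneOn_of_deriv_nonneg (convex_Icc s t0)
        · exact fun x hx => (hy1 x hx.1).continuousAt.continuousWithinAt
        · intro x hx
          rw [interior_Icc] at hx
          exact (hy1 x hx.1.le).differentiableAt.differentiableWithinAt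
        · intro x hx
          rw [interior_Icc] at hx
          rw [(hy1 x hx.1.le).deriv]
          exact (hgood x hx.1.le hx.2).2
      have := hmono ⟨le_refl s, ht0s⟩ ⟨ht0s, le_refl t0⟩ ht0s
      rw [hinit] at this; linarith
  have hy1dt0 : 0 ≤ y1d t0 := by
    rcases eq_or_lt_of_le ht0s with heq | hlt
    · rw [← heq, hinit']
    · have hc : Filter.Tendsto y1d (nhdsWithin t0 (Ico s t0)) (nhds (y1d t0)) :=
        (hy1d t0 ht0s).continuousAt.continuousWithinAt
      have hne : (nhdsWithin t0 (Ico s t0)).NeBot := by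
        apply mem_closure_iff_nhdsWithin_neBot.mp
        rw [closure_Ico (ne_of_lt hlt)]
        exact ⟨ht0s, le_refl t0⟩
      exact ge_of_tendsto hc
        (eventually_nhdsWithin_of_forall (fun x hx => (hgood x hx.1 hx.2).2))
  obtain ⟨ε, hε, hgood2⟩ : ∃ ε > 0, ∀ x ∈ Icc t0 (t0 + ε), 0 < y1 x ∧ 0 ≤ y1d x := by
    have hy1near : ∀ᶠ x in nhds t0, 0 < y1 x :=
      continuousAt_const.eventually_lt (hy1 t0 ht0s).continuousAt hy1t0
    rw [Metric.eventually_nhds_iff] at hy1near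
    obtain ⟨e2, he2, hys⟩ := hy1near
    rcases eq_or_lt_of_le hy1dt0 with heq0 | hdpos
    · -- y1d t0 = 0, so y1dd t0 = lam^2 * y1 t0 > 0
      have hddpos : 0 < y1dd t0 := by
        have h1 := hode t0 ht0s
        rw [← heq0] at h1
        have h2 : 0 < lam ^ 2 * y1 t0 := by positivity
        nlinarith [h1, h2]
      have hev : ∀ᶠ x in nhdsWithin t0 (Ici s), 0 < y1dd x :=
        (hy1dd t0 ht0s).eventually (eventually_gt_nhds hddpos)
      rw [Filter.eventually_iff, Metric.mem_nhdsWithin_iff] at hev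
      obtain ⟨e1, he1, hds⟩ := hev
      refine ⟨min e1 e2 / 2, by positivity, ?_⟩
      intro x hx
      have hxd : dist x t0 < min e1 e2 := by
        rw [Real.dist_eq, abs_of_nonneg (by linarith [hx.1])]
        have := hx.2
        have h3 : min e1 e2 / 2 < min e1 e2 := by
          have : 0 < min e1 e2 := lt_min he1 he2
          linarith
        linarith
      have hmono : MonotoneOn y1d (Icc t0 (t0 + min e1 e2 / 2)) := by
        apply monotoneOn_of_deriv_nonneg (convex_Icc _ _)
        · intro z hz
          exact (hy1d z (le_trans ht0s hz.1)).continuousAt.continuousWithinAt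
        · intro z hz
          rw [interior_Icc] at hz
          exact (hy1d z (le_trans ht0s hz.1.le)).differentiableAt.differentiableWithinAt
        · intro z hz
          rw [interior_Icc] at hz
          rw [(hy1d z (le_trans ht0s hz.1.le)).deriv]
          refine le_of_lt (hds ⟨Metric.mem_ball.mpr ?_, le_trans ht0s hz.1.le⟩)
          rw [Real.dist_eq, abs_of_nonneg (by linarith [hz.1.le])]
          have : 0 < min e1 e2 := lt_min he1 he2
          have := hz.2
          calc z - t0 < min e1 e2 / 2 := by linarith
            _ ≤ e1 := by
              have := min_le_left e1 e2
              linarith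
      refine ⟨hys (lt_of_lt_of_le hxd (min_le_right _ _)), ?_⟩
      have h4 := hmono (left_mem_Icc.mpr (by have := lt_min he1 he2; linarith)) hx hx.1
      rw [← heq0] at h4
      exact h4
    · -- y1d t0 > 0
      have hy1dnear : ∀ᶠ x in nhds t0, 0 < y1d x :=
        continuousAt_const.eventually_lt (hy1d t0 ht0s).continuousAt hdpos
      rw [Metric.eventually_nhds_iff] at hy1dnear
      obtain ⟨e3, he3, hyds⟩ := hy1dnear
      refine ⟨min e3 e2 / 2, by positivity, ?_⟩
      intro x hx
      have hxd : dist x t0 < min e3 e2 := by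
        rw [Real.dist_eq, abs_of_nonneg (by linarith [hx.1])]
        have h3 : 0 < min e3 e2 := lt_min he3 he2
        have := hx.2
        linarith
      exact ⟨hys (lt_of_lt_of_le hxd (min_le_right _ _)), le_of_lt (hyds (lt_of_lt_of_le hxd (min_le_left _ _)))⟩
  obtain ⟨b, hbB, hblt⟩ := Real.lt_sInf_add_pos hBne hε
  have hbt0 : t0 ≤ b := csInf_le hBbd hbB
  have hb2 := hgood2 b ⟨hbt0, le_of_lt hblt⟩
  rcases hbB.2 with h | h
  · linarith [hb2.1]
  · linarith [hb2.2]
end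

section
/- Let a : [0,∞) → ℝ be continuous and nonnegative, λ > 0, s ≥ 0, and let y₁ solve y₁'' + a(t) y₁' − λ² y₁ = 0 on [s,∞) with y₁(s) = 1, y₁'(s) = 0. Then y₁(t) ≤ cosh(λ(t−s)) for all t ≥ s. -/
open Set Real MeasureTheory intervalIntegral Filter Topology

theorem y1_upper_bound (a : ℝ → ℝ) (ha : ContinuousOn a (Ici 0))
    (ha0 : ∀ t ∈ Ici (0:ℝ), 0 ≤ a t)
    (lam : ℝ) (hlam : 0 < lam) (s : ℝ) (hs : 0 ≤ s)
    (y1 y1d y1dd : ℝ → ℝ)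
    (hy1 : ∀ t ∈ Ici s, HasDerivAt y1 (y1d t) t)
    (hy1d : ∀ t ∈ Ici s, HasDerivAt y1d (y1dd t) t)
    (hy1dd : ContinuousOn y1dd (Ici s))
    (hode : ∀ t ∈ Ici s, y1dd t + a t * y1d t - lam ^ 2 * y1 t = 0)
    (hinit : y1 s = 1) (hinit' : y1d s = 0) :
    ∀ t ∈ Ici s, y1 t ≤ Real.cosh (lam * (t - s)) := by
  have hy1c : ∀ u ∈ Ici s, ContinuousAt y1 u := fun u hu => (hy1 u hu).continuousAt
  have hy1dc : ∀ u ∈ Ici s, ContinuousAt y1d u := fun u hu => (hy1d u hu).continuousAt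
  -- Step 1 : y1d ≥ 0 and y1 ≥ 1 on [s, ∞)
  have key : ∀ t ∈ Ici s, 0 ≤ y1d t ∧ 1 ≤ y1 t := by
    intro t ht
    by_contra hcon
    set m : ℝ → ℝ := fun u => min (y1d u) (y1 u - 1) with hm
    have hmt : m t < 0 := by
      rcases not_and_or.mp hcon with h | h
      · exact min_lt_iff.mpr (Or.inl (not_le.mp h))
      · exact min_lt_iff.mpr (Or.inr (by linarith [not_le.mp h]))
    set S : Set ℝ := {u : ℝ | u ∈ Icc s t ∧ m u < 0} with hSdef
    have htS : t ∈ S := ⟨⟨ht, le_refl t⟩, hmt⟩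
    have hSne : S.Nonempty := ⟨t, htS⟩
    have hSbdd : BddBelow S := ⟨s, fun u hu => hu.1.1⟩
    set T := sInf S with hTdef
    have hsT : s ≤ T := le_csInf hSne (fun u hu => hu.1.1)
    have hTt : T ≤ t := csInf_le hSbdd htS
    have hTmem : T ∈ Ici s := hsT
    have hmc : ∀ u ∈ Ici s, ContinuousAt m u := fun u hu =>
      (hy1dc u hu).min ((hy1c u hu).sub continuousAt_const)
    have hTnotS : T ∉ S := by
      intro hTS
      have hsT' : s < T := by
        rcases lt_or_eq_of_le hsT with h | h
        · exact h
        · exfalso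
          have hms : m s < 0 := by rw [← h] at hTS; exact hTS.2
          simp [hm, hinit, hinit'] at hms
      have hev : m ⁻¹' (Iio 0) ∈ 𝓝 T := (hmc T hTmem) (Iio_mem_nhds hTS.2)
      have hev' : m ⁻¹' (Iio 0) ∈ 𝓝[<] T := nhdsWithin_le_nhds hev
      obtain ⟨l, hl, hsub⟩ := mem_nhdsLT_iff_exists_Ioo_subset.mp hev'
      set u := (max l s + T) / 2 with hu
      have hmax : max l s < T := max_lt hl hsT'
      have hu1 : max l s < u := by rw [hu]; linarith
      have hu2 : u < T := by rw [hu]; linarith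
      have huS : u ∈ S := by
        refine ⟨⟨le_of_lt (lt_of_le_of_lt (le_max_right l s) hu1), le_trans (le_of_lt hu2) hTt⟩, ?_⟩
        exact hsub ⟨lt_of_le_of_lt (le_max_left l s) hu1, hu2⟩
      exact absurd (csInf_le hSbdd huS) (not_le.mpr hu2)
    have hmT : 0 ≤ m T := not_lt.mp (fun h => hTnotS ⟨⟨hsT, hTt⟩, h⟩)
    have hy1dT : 0 ≤ y1d T := le_trans hmT (min_le_left _ _)
    have hy1T : 1 ≤ y1 T := by have := le_trans hmT (min_le_right _ _); linarith
    -- right-neighborhood positivity of y1d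
    have hpos : {u : ℝ | 0 < y1d u} ∈ 𝓝[>] T := by
      rcases lt_or_eq_of_le hy1dT with h | h
      · exact nhdsWithin_le_nhds ((hy1dc T hTmem) (Ioi_mem_nhds h))
      · -- y1d T = 0, so y1dd T = lam^2 * y1 T > 0
        have hddT : y1dd T = lam ^ 2 * y1 T := by
          have h2 := hode T hTmem; rw [← h] at h2; linarith
        have hddpos : 0 < y1dd T := by
          rw [hddT]; positivity
        have hslope := hasDerivAt_iff_tendsto_slope.mp (hy1d T hTmem)
        have h1 : {u : ℝ | 0 < slope y1d T u} ∈ 𝓝[≠] T := hslope (Ioi_mem_nhds hddpos)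
        have h2 : {u : ℝ | 0 < slope y1d T u} ∈ 𝓝[>] T :=
          nhdsWithin_mono T (fun u (hu : u ∈ Ioi T) => ne_of_gt hu) h1
        filter_upwards [h2, self_mem_nhdsWithin] with u hu1 hu2
        have huT : (0:ℝ) < u - T := sub_pos.mpr hu2
        rw [slope_def_field] at hu1
        have hnum : 0 < y1d u - y1d T := by
          by_contra hneg
          push_neg at hneg
          have := div_nonpos_of_nonpos_of_nonneg hneg (le_of_lt huT)
          linarith
        linarith
    obtain ⟨c, hc, hsub⟩ := mem_nhdsGT_iff_exists_Ioc_subset.mp hpos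
    have hTltt : T < t := by
      rcases lt_or_eq_of_le hTt with h | h
      · exact h
      · exact absurd (h ▸ htS) hTnotS
    obtain ⟨u, huS, huc⟩ := (csInf_lt_iff hSbdd hSne).mp (show sInf S < c from hc)
    have hTu : T ≤ u := csInf_le hSbdd huS
    have hTu' : T < u := lt_of_le_of_ne hTu (fun h => hTnotS (h ▸ huS))
    have hydu : 0 < y1d u := hsub ⟨hTu', le_of_lt huc⟩
    -- y1 monotone on [T, u]
    have hmono : MonotoneOn y1 (Icc T u) := by
      apply monotoneOn_of_deriv_nonneg (convex_Icc T u)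
      · exact fun x hx => ((hy1 x (le_trans hsT hx.1)).continuousAt).continuousWithinAt
      · intro x hx
        rw [interior_Icc] at hx
        exact ((hy1 x (le_trans hsT (le_of_lt hx.1))).differentiableAt).differentiableWithinAt
      · intro x hx
        rw [interior_Icc] at hx
        rw [(hy1 x (le_trans hsT (le_of_lt hx.1))).deriv]
        exact le_of_lt (hsub ⟨hx.1, le_trans (le_of_lt hx.2) (le_of_lt huc)⟩)
    have hy1u : 1 ≤ y1 u :=
      le_trans hy1T (hmono ⟨le_refl T, le_of_lt hTu'⟩ ⟨le_of_lt hTu', le_refl u⟩ (le_of_lt hTu'))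
    have : 0 ≤ m u := le_min (le_of_lt hydu) (by linarith)
    exact absurd huS.2 (not_lt.mpr this)
  -- Step 2 : Wronskian comparison with cosh
  intro t ht
  have hch : ∀ u : ℝ, HasDerivAt (fun v => Real.cosh (lam * (v - s)))
      (lam * Real.sinh (lam * (u - s))) u := by
    intro u
    have h1 : HasDerivAt (fun v : ℝ => lam * (v - s)) lam u := by
      simpa using ((hasDerivAt_id u).sub_const s).const_mul lam
    exact ((Real.hasDerivAt_cosh (lam * (u - s))).comp u h1).congr_deriv (by ring : _ = lam * Real.sinh (lam * (u - s)))
  have hsh : ∀ u : ℝ, HasDerivAt (fun v => lam * Real.sinh (lam * (v - s)))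
      (lam ^ 2 * Real.cosh (lam * (u - s))) u := by
    intro u
    have h1 : HasDerivAt (fun v : ℝ => lam * (v - s)) lam u := by
      simpa using ((hasDerivAt_id u).sub_const s).const_mul lam
    have h2 := ((Real.hasDerivAt_sinh (lam * (u - s))).comp u h1).const_mul lam
    exact h2.congr_deriv (by ring)
  set c : ℝ → ℝ := fun v => Real.cosh (lam * (v - s)) with hcdef
  set c' : ℝ → ℝ := fun v => lam * Real.sinh (lam * (v - s)) with hc'def
  set W : ℝ → ℝ := fun v => y1d v * c v - y1 v * c' v with hWdef
  have hWd : ∀ u ∈ Ici s, HasDerivAt W (-(a u * y1d u * c u)) u := by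
    intro u hu
    have h1 := ((hy1d u hu).mul (hch u)).sub ((hy1 u hu).mul (hsh u))
    refine h1.congr_deriv ?_
    have h2 := hode u hu
    linear_combination (Real.cosh (lam * (u - s))) * h2
  have hWanti : AntitoneOn W (Icc s t) := by
    apply antitoneOn_of_deriv_nonpos (convex_Icc s t)
    · exact fun x hx => ((hWd x hx.1).continuousAt).continuousWithinAt
    · intro x hx
      rw [interior_Icc] at hx
      exact ((hWd x (le_of_lt hx.1)).differentiableAt).differentiableWithinAt
    · intro x hx
      rw [interior_Icc] at hx
      rw [(hWd x (le_of_lt hx.1)).deriv]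
      have hx' : x ∈ Ici s := le_of_lt hx.1
      have ha' : 0 ≤ a x := ha0 x (le_trans hs hx')
      have hyd' : 0 ≤ y1d x := (key x hx').1
      have hcpos : 0 < c x := by exact Real.cosh_pos (lam * (x - s))
      have hprod := mul_nonneg (mul_nonneg ha' hyd') hcpos.le
      linarith
  have hWs : W s = 0 := by
    simp [hWdef, hcdef, hc'def, hinit, hinit']
  have hWle : ∀ u ∈ Icc s t, W u ≤ 0 := by
    intro u hu
    calc W u ≤ W s := hWanti (left_mem_Icc.mpr ht) hu hu.1
    _ = 0 := hWs
  -- g = y1 / c is antitone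
  set g : ℝ → ℝ := fun v => y1 v / c v with hgdef
  have hgd : ∀ u ∈ Ici s, HasDerivAt g (W u / (c u) ^ 2) u := by
    intro u hu
    exact (hy1 u hu).div (hch u) (by exact (Real.cosh_pos (lam * (u - s))).ne')
  have hganti : AntitoneOn g (Icc s t) := by
    apply antitoneOn_of_deriv_nonpos (convex_Icc s t)
    · exact fun x hx => ((hgd x hx.1).continuousAt).continuousWithinAt
    · intro x hx
      rw [interior_Icc] at hx
      exact ((hgd x (le_of_lt hx.1)).differentiableAt).differentiableWithinAt
    · intro x hx
      rw [interior_Icc] at hx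
      rw [(hgd x (le_of_lt hx.1)).deriv]
      apply div_nonpos_of_nonpos_of_nonneg
      · exact hWle x ⟨le_of_lt hx.1, le_of_lt hx.2⟩
      · positivity
  have hgt : g t ≤ g s := hganti (left_mem_Icc.mpr ht) (right_mem_Icc.mpr ht) ht
  have hgs : g s = 1 := by simp [hgdef, hcdef, hinit]
  rw [hgs] at hgt
  have hcpos : 0 < c t := by exact Real.cosh_pos (lam * (t - s))
  calc y1 t = g t * c t := by simp only [hgdef]; field_simp
  _ ≤ 1 * c t := by nlinarith
  _ = Real.cosh (lam * (t - s)) := by simp [hcdef]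
end

section
/- Let a : [0,∞) → ℝ be continuous and nonnegative with A(t) = ∫₀ᵗ a(r) dr, λ > 0, s ≥ 0, and let y₁ solve y₁'' + a(t) y₁' − λ² y₁ = 0 on [s,∞) with y₁(s) = 1, y₁'(s) = 0. Then y₁(t) ≥ e^{A(s)−A(t)} cosh(λ(t−s)) for all t ≥ s. -/
open Set Real MeasureTheory intervalIntegral

private lemma monoD {D : Set ℝ} (hD : Convex ℝ D) {f f' : ℝ → ℝ}
    (hf : ∀ t ∈ D, HasDerivAt f (f' t) t) (h0 : ∀ t ∈ interior D, 0 ≤ f' t) :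
    MonotoneOn f D :=
  monotoneOn_of_deriv_nonneg hD
    (fun t ht => (hf t ht).continuousAt.continuousWithinAt)
    (fun t ht => (hf t (interior_subset ht)).differentiableAt.differentiableWithinAt)
    (fun t ht => by rw [(hf t (interior_subset ht)).deriv]; exact h0 t ht)

theorem y1_lower_bound (a : ℝ → ℝ) (ha : ContinuousOn a (Ici 0))
    (ha0 : ∀ t ∈ Ici (0:ℝ), 0 ≤ a t)
    (A : ℝ → ℝ) (hA : ∀ t, A t = ∫ r in (0:ℝ)..t, a r)
    (lam : ℝ) (hlam : 0 < lam) (s : ℝ) (hs : 0 ≤ s)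
    (y1 y1d y1dd : ℝ → ℝ)
    (hy1 : ∀ t ∈ Ici s, HasDerivAt y1 (y1d t) t)
    (hy1d : ∀ t ∈ Ici s, HasDerivAt y1d (y1dd t) t)
    (hy1dd : ContinuousOn y1dd (Ici s))
    (hode : ∀ t ∈ Ici s, y1dd t + a t * y1d t - lam ^ 2 * y1 t = 0)
    (hinit : y1 s = 1) (hinit' : y1d s = 0) :
    ∀ t ∈ Ici s, Real.exp (A s - A t) * Real.cosh (lam * (t - s)) ≤ y1 t := by
  -- extend `a` continuously to all of ℝ
  set b : ℝ → ℝ := fun t => a (max t 0) with hbdef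
  have hb : Continuous b :=
    ha.comp_continuous (continuous_id.max continuous_const) (fun x => mem_Ici.2 (le_max_right _ _))
  have hb0 : ∀ t, 0 ≤ b t := fun t => ha0 _ (mem_Ici.2 (le_max_right _ _))
  have hbeq : ∀ t ∈ Ici (0:ℝ), b t = a t := by
    intro t ht; simp only [hbdef]; rw [max_eq_left ht]
  set B : ℝ → ℝ := fun t => ∫ r in (0:ℝ)..t, b r with hBdef
  have hB : ∀ t, HasDerivAt B (b t) t := fun t =>
    (hb.integral_hasStrictDerivAt 0 t).hasDerivAt
  have hBA : ∀ t ∈ Ici (0:ℝ), B t = A t := by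
    intro t ht
    rw [hA]
    refine intervalIntegral.integral_congr (fun r hr => ?_)
    rw [uIcc_of_le ht] at hr
    exact hbeq r hr.1
  set c : ℝ → ℝ := fun t => Real.exp (B t - B s) with hcdef
  have hc : ∀ t, HasDerivAt c (b t * c t) t := by
    intro t
    have h := ((hB t).sub_const (B s)).exp
    simpa [hcdef, mul_comm] using h
  have hcpos : ∀ t, 0 < c t := fun t => Real.exp_pos _
  have hcs : c s = 1 := by simp [hcdef]
  have hsub : ∀ t ∈ Ici s, (0:ℝ) ≤ t := fun t ht => le_trans hs ht
  -- derivative of w = c * y1d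
  have hw : ∀ t ∈ Ici s, HasDerivAt (fun t => c t * y1d t) (c t * (lam ^ 2 * y1 t)) t := by
    intro t ht
    have h := (hc t).mul (hy1d t ht)
    have he : b t * c t * y1d t + c t * y1dd t = c t * (lam ^ 2 * y1 t) := by
      rw [hbeq t (hsub t ht)]
      linear_combination c t * (hode t ht)
    rwa [he] at h
  -- Step 1 : nonnegativity of y1 on [s, ∞)
  have hpos0 : ∀ t ∈ Ici s, 0 ≤ y1 t := by
    by_contra h
    push_neg at h
    obtain ⟨t0, ht0, ht0neg⟩ := h
    have hy1c : ContinuousOn y1 (Ici s) := fun t ht =>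
      (hy1 t ht).continuousAt.continuousWithinAt
    set S : Set ℝ := Ici s ∩ y1 ⁻¹' Iic 0 with hSdef
    have hScl : IsClosed S := hy1c.preimage_isClosed_of_isClosed isClosed_Ici isClosed_Iic
    have hSne : S.Nonempty := ⟨t0, ht0, ht0neg.le⟩
    have hSbdd : BddBelow S := ⟨s, fun x hx => hx.1⟩
    set T := sInf S with hTdef
    have hTS : T ∈ S := hScl.csInf_mem hSne hSbdd
    have hsT : s < T := by
      rcases lt_or_eq_of_le (mem_Ici.1 hTS.1) with h' | h'
      · exact h'
      · exfalso
        have h2 := hTS.2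
        rw [← h'] at h2
        simp only [mem_preimage, mem_Iic, hinit] at h2
        linarith
    have hIoo : ∀ u ∈ Ioo s T, 0 < y1 u := by
      intro u hu
      by_contra hle
      push_neg at hle
      exact absurd (csInf_le hSbdd ⟨hu.1.le, hle⟩) (not_le.2 hu.2)
    have hIccIci : Icc s T ⊆ Ici s := fun x hx => hx.1
    have hwmono : MonotoneOn (fun t => c t * y1d t) (Icc s T) := by
      refine monoD (convex_Icc s T) (fun t ht => hw t (hIccIci ht)) ?_
      rw [interior_Icc]
      intro u hu
      have := (hIoo u hu).le
      positivity
    have hy1dnn : ∀ u ∈ Icc s T, 0 ≤ y1d u := by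
      intro u hu
      have h0 : c s * y1d s ≤ c u * y1d u :=
        hwmono (left_mem_Icc.2 hsT.le) hu hu.1
      rw [hinit', mul_zero] at h0
      exact nonneg_of_mul_nonneg_right h0 (hcpos u)
    have hy1mono : MonotoneOn y1 (Icc s T) := by
      refine monoD (convex_Icc s T) (fun t ht => hy1 t (hIccIci ht)) ?_
      rw [interior_Icc]
      exact fun u hu => hy1dnn u (Ioo_subset_Icc_self hu)
    have h1 : y1 s ≤ y1 T := hy1mono (left_mem_Icc.2 hsT.le) (right_mem_Icc.2 hsT.le) hsT.le
    rw [hinit] at h1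
    have := hTS.2
    simp only [mem_preimage, mem_Iic] at this
    linarith
  -- the comparison functions
  set P : ℝ → ℝ := fun t => c t * y1 t - Real.cosh (lam * (t - s)) with hPdef
  set Q : ℝ → ℝ := fun t => c t * y1d t - lam * Real.sinh (lam * (t - s)) with hQdef
  have hlin : ∀ t : ℝ, HasDerivAt (fun t => lam * (t - s)) lam t := by
    intro t
    simpa using ((hasDerivAt_id t).sub_const s).const_mul lam
  have hPs : P s = 0 := by simp [hPdef, hcs, hinit]
  have hQs : Q s = 0 := by simp [hQdef, hcs, hinit']
  have hP : ∀ t ∈ Ici s, HasDerivAt P (b t * (c t * y1 t) + Q t) t := by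
    intro t ht
    have h1 := (hc t).mul (hy1 t ht)
    have h2 := (Real.hasDerivAt_cosh (lam * (t - s))).comp t (hlin t)
    have h := h1.sub h2
    have he : b t * c t * y1 t + c t * y1d t - Real.sinh (lam * (t - s)) * lam
        = b t * (c t * y1 t) + Q t := by
      simp only [hQdef]; ring
    rwa [he] at h
  have hQ : ∀ t ∈ Ici s, HasDerivAt Q (lam ^ 2 * P t) t := by
    intro t ht
    have h1 := hw t ht
    have h2 := ((Real.hasDerivAt_sinh (lam * (t - s))).comp t (hlin t)).const_mul lam
    have h := h1.sub h2
    have he : c t * (lam ^ 2 * y1 t) - lam * (Real.cosh (lam * (t - s)) * lam)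
        = lam ^ 2 * P t := by
      simp only [hPdef]; ring
    rwa [he] at h
  -- Step 2 : R = lam • P + Q is nonnegative
  have hRnn : ∀ t ∈ Ici s, 0 ≤ lam * P t + Q t := by
    have hf : ∀ t ∈ Ici s, HasDerivAt (fun t => Real.exp (-(lam * t)) * (lam * P t + Q t))
        (Real.exp (-(lam * t)) * (lam * (b t * (c t * y1 t)))) t := by
      intro t ht
      have hexp : HasDerivAt (fun t => Real.exp (-(lam * t))) (Real.exp (-(lam * t)) * (-lam)) t := by
        have := (((hasDerivAt_id t).const_mul lam).neg).exp
        simpa using this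
      have hR := ((hP t ht).const_mul lam).add (hQ t ht)
      have h := hexp.mul hR
      have he : Real.exp (-(lam * t)) * (-lam) * (lam * P t + Q t) +
          Real.exp (-(lam * t)) * (lam * (b t * (c t * y1 t) + Q t) + lam ^ 2 * P t)
          = Real.exp (-(lam * t)) * (lam * (b t * (c t * y1 t))) := by ring
      change HasDerivAt (fun t => Real.exp (-(lam * t)) * (lam * P t + Q t))
        (Real.exp (-(lam * t)) * (-lam) * (lam * P t + Q t) +
          Real.exp (-(lam * t)) * (lam * (b t * (c t * y1 t) + Q t) + lam ^ 2 * P t)) t at h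
      rwa [he] at h
    have hmono : MonotoneOn (fun t => Real.exp (-(lam * t)) * (lam * P t + Q t)) (Ici s) := by
      refine monoD (convex_Ici s) hf ?_
      rw [interior_Ici]
      intro u hu
      have h1 := hpos0 u (mem_Ici.2 (le_of_lt (mem_Ioi.1 hu)))
      have h2 := hb0 u
      have h3 := (hcpos u).le
      positivity
    intro t ht
    have h := hmono self_mem_Ici ht ht
    simp only [hPs, hQs, mul_zero, add_zero] at h
    nlinarith [Real.exp_pos (-(lam * t))]
  -- Step 3 : Q is nonnegative
  have hQnn : ∀ t ∈ Ici s, 0 ≤ Q t := by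
    have hf : ∀ t ∈ Ici s, HasDerivAt (fun t => Real.exp (lam * t) * Q t)
        (Real.exp (lam * t) * (lam * (lam * P t + Q t))) t := by
      intro t ht
      have hexp : HasDerivAt (fun t => Real.exp (lam * t)) (Real.exp (lam * t) * lam) t := by
        have := ((hasDerivAt_id t).const_mul lam).exp
        simpa using this
      have h := hexp.mul (hQ t ht)
      have he : Real.exp (lam * t) * lam * Q t + Real.exp (lam * t) * (lam ^ 2 * P t)
          = Real.exp (lam * t) * (lam * (lam * P t + Q t)) := by ring
      rwa [he] at h
    have hmono : MonotoneOn (fun t => Real.exp (lam * t) * Q t) (Ici s) := by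
      refine monoD (convex_Ici s) hf ?_
      rw [interior_Ici]
      intro u hu
      have h1 := hRnn u (mem_Ici.2 (le_of_lt (mem_Ioi.1 hu)))
      have h2 := (Real.exp_pos (lam * u)).le
      positivity
    intro t ht
    have h := hmono self_mem_Ici ht ht
    simp only [hQs, mul_zero] at h
    nlinarith [Real.exp_pos (lam * t)]
  -- Step 4 : P is nonnegative
  have hPnn : ∀ t ∈ Ici s, 0 ≤ P t := by
    have hmono : MonotoneOn P (Ici s) := by
      refine monoD (convex_Ici s) hP ?_
      rw [interior_Ici]
      intro u hu
      have h1 := hpos0 u (mem_Ici.2 (le_of_lt (mem_Ioi.1 hu)))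
      have h2 := hb0 u
      have h3 := (hcpos u).le
      have h4 := hQnn u (mem_Ici.2 (le_of_lt (mem_Ioi.1 hu)))
      positivity
    intro t ht
    have h := hmono self_mem_Ici ht ht
    rwa [hPs] at h
  -- conclusion
  intro t ht
  have hPt := hPnn t ht
  have hct : c t = Real.exp (A t - A s) := by
    rw [hcdef]; simp only []
    rw [hBA t (hsub t ht), hBA s hs]
  have hkey : Real.cosh (lam * (t - s)) ≤ c t * y1 t := by
    simp only [hPdef] at hPt; linarith
  have h := mul_le_mul_of_nonneg_left hkey (Real.exp_pos (A s - A t)).le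
  calc Real.exp (A s - A t) * Real.cosh (lam * (t - s))
      ≤ Real.exp (A s - A t) * (c t * y1 t) := h
    _ = y1 t := by
        rw [hct, ← mul_assoc, ← Real.exp_add]
        simp
end

section
/- Let a : [0,∞) → ℝ be continuous, nonnegative, and integrable with ∫₀^∞ a(t) dt = ‖a‖_{L¹} < ∞. Let λ > 0, s ≥ 0, and let y₁ solve y₁'' + a(t) y₁' − λ² y₁ = 0 on [s,∞) with y₁(s) = 1, y₁'(s) = 0. Then cosh(λ(t−s)) ≥ y₁(t) ≥ e^{−‖a‖_{L¹}} cosh(λ(t−s)) for all t ≥ s. -/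
open Set Real MeasureTheory intervalIntegral

lemma mono_aux (f f' : ℝ → ℝ) (s t : ℝ) (hst : s ≤ t)
    (hf : ∀ x ∈ Icc s t, HasDerivAt f (f' x) x)
    (h0 : ∀ x ∈ Ioo s t, 0 ≤ f' x) : f s ≤ f t := by
  have hm : MonotoneOn f (Icc s t) := by
    apply monotoneOn_of_deriv_nonneg (convex_Icc s t)
    · exact fun x hx => (hf x hx).continuousAt.continuousWithinAt
    · intro x hx
      rw [interior_Icc] at hx
      exact (hf x (Ioo_subset_Icc_self hx)).differentiableAt.differentiableWithinAt
    · intro x hx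
      rw [interior_Icc] at hx
      rw [(hf x (Ioo_subset_Icc_self hx)).deriv]
      exact h0 x hx
  exact hm (left_mem_Icc.2 hst) (right_mem_Icc.2 hst) hst

theorem y1_two_sided_bound (a : ℝ → ℝ) (ha : ContinuousOn a (Ici 0))
    (ha0 : ∀ t ∈ Ici (0:ℝ), 0 ≤ a t)
    (haL1 : IntegrableOn a (Ici 0))
    (M : ℝ) (hM : M = ∫ t in Ici (0:ℝ), a t)
    (lam : ℝ) (hlam : 0 < lam) (s : ℝ) (hs : 0 ≤ s)
    (y1 y1d y1dd : ℝ → ℝ)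
    (hy1 : ∀ t ∈ Ici s, HasDerivAt y1 (y1d t) t)
    (hy1d : ∀ t ∈ Ici s, HasDerivAt y1d (y1dd t) t)
    (hy1dd : ContinuousOn y1dd (Ici s))
    (hode : ∀ t ∈ Ici s, y1dd t + a t * y1d t - lam ^ 2 * y1 t = 0)
    (hinit : y1 s = 1) (hinit' : y1d s = 0) :
    ∀ t ∈ Ici s, Real.exp (-M) * Real.cosh (lam * (t - s)) ≤ y1 t ∧
      y1 t ≤ Real.cosh (lam * (t - s)) := by
  -- modified coefficient, continuous on all of ℝ
  set aa : ℝ → ℝ := fun r => a (max r 0) with haa_def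
  have haac : Continuous aa :=
    ha.comp_continuous (continuous_id.max continuous_const) fun x => mem_Ici.2 (le_max_right x 0)
  have haa_eq : ∀ x : ℝ, s ≤ x → aa x = a x := by
    intro x hx
    simp only [haa_def, max_eq_left (le_trans hs hx)]
  -- the primitive A
  set A : ℝ → ℝ := fun u => ∫ r in s..u, aa r with hA_def
  have hA : ∀ u : ℝ, HasDerivAt A (aa u) u := fun u =>
    (intervalIntegral.integral_hasStrictDerivAt_right (haac.intervalIntegrable s u)
      (haac.stronglyMeasurableAtFilter _ _) haac.continuousAt).hasDerivAt
  have hAs : A s = 0 := intervalIntegral.integral_same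
  have hM0 : 0 ≤ M := by
    rw [hM]; exact setIntegral_nonneg measurableSet_Ici ha0
  have hAM : ∀ t : ℝ, s ≤ t → A t ≤ M := by
    intro t ht
    have h1 : A t = ∫ r in Ioc s t, a r := by
      rw [hA_def]
      simp only
      rw [intervalIntegral.integral_congr (g := a) (by
        intro x hx
        rw [uIcc_of_le ht] at hx
        exact haa_eq x hx.1)]
      exact intervalIntegral.integral_of_le ht
    rw [h1, hM]
    apply setIntegral_mono_set haL1
    · exact (ae_restrict_iff' measurableSet_Ici).2 (Filter.Eventually.of_forall ha0)
    · exact HasSubset.Subset.eventuallyLE fun x hx => le_trans hs (le_of_lt hx.1)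
  -- ODE rearranged
  have hodd : ∀ x : ℝ, s ≤ x → y1dd x = lam ^ 2 * y1 x - a x * y1d x := by
    intro x hx; have := hode x hx; linarith
  -- the function P = e^A * y1d and its derivative
  have hP : ∀ x : ℝ, s ≤ x → HasDerivAt (fun u => Real.exp (A u) * y1d u)
      (Real.exp (A x) * aa x * y1d x + Real.exp (A x) * y1dd x) x := by
    intro x hx
    exact ((hA x).exp.mul (hy1d x hx))
  have hPs : Real.exp (A s) * y1d s = 0 := by rw [hinit']; ring
  -- positivity of y1
  have hpos : ∀ t ∈ Ici s, 0 < y1 t := by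
    by_contra h
    push_neg at h
    obtain ⟨b, hb, hble⟩ := h
    set K : Set ℝ := {x | x ∈ Icc s b ∧ y1 x ≤ 0} with hK_def
    have hKne : K.Nonempty := ⟨b, ⟨hb, le_refl b⟩, hble⟩
    have hKbdd : BddBelow K := ⟨s, fun x hx => hx.1.1⟩
    have hKcl : IsClosed K := by
      have hcont : ContinuousOn y1 (Icc s b) := fun x hx =>
        (hy1 x hx.1).continuousAt.continuousWithinAt
      exact hcont.preimage_isClosed_of_isClosed isClosed_Icc isClosed_Iic
    set t1 := sInf K with ht1_def
    have ht1K : t1 ∈ K := hKcl.csInf_mem hKne hKbdd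
    have ht1s : s < t1 := by
      rcases lt_or_eq_of_le ht1K.1.1 with h' | h'
      · exact h'
      · exfalso; have := ht1K.2; rw [← h', hinit] at this; linarith
    have hpre : ∀ r : ℝ, s ≤ r → r < t1 → 0 < y1 r := by
      intro r hr hrt
      by_contra hc
      push_neg at hc
      have : r ∈ K := ⟨⟨hr, le_trans hrt.le ht1K.1.2⟩, hc⟩
      exact absurd (csInf_le hKbdd this) (not_le.2 hrt)
    have hd_nonneg : ∀ r : ℝ, s ≤ r → r < t1 → 0 ≤ y1d r := by
      intro r hr hrt
      have hPr : Real.exp (A s) * y1d s ≤ Real.exp (A r) * y1d r := by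
        apply mono_aux _ (fun x => Real.exp (A x) * aa x * y1d x + Real.exp (A x) * y1dd x)
          s r hr (fun x hx => hP x hx.1)
        intro x hx
        have hxs : s ≤ x := hx.1.le
        have hxode := hodd x hxs
        have hae := haa_eq x hxs
        have hval : Real.exp (A x) * aa x * y1d x + Real.exp (A x) * y1dd x
            = Real.exp (A x) * (lam ^ 2 * y1 x) := by rw [hae, hxode]; ring
        beta_reduce
        rw [hval]
        have := hpre x hxs (lt_trans hx.2 hrt)
        positivity
      rw [hPs] at hPr
      nlinarith [Real.exp_pos (A r)]
    have hmono : y1 s ≤ y1 t1 := by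
      apply mono_aux y1 y1d s t1 ht1s.le (fun x hx => hy1 x hx.1)
      intro x hx
      exact hd_nonneg x hx.1.le hx.2
    rw [hinit] at hmono
    have := ht1K.2
    linarith
  -- y1d nonnegative
  have hd : ∀ t ∈ Ici s, 0 ≤ y1d t := by
    intro t ht
    have hPr : Real.exp (A s) * y1d s ≤ Real.exp (A t) * y1d t := by
      apply mono_aux _ (fun x => Real.exp (A x) * aa x * y1d x + Real.exp (A x) * y1dd x)
        s t ht (fun x hx => hP x hx.1)
      intro x hx
      have hxs : s ≤ x := hx.1.le
      have hval : Real.exp (A x) * aa x * y1d x + Real.exp (A x) * y1dd x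
          = Real.exp (A x) * (lam ^ 2 * y1 x) := by rw [haa_eq x hxs, hodd x hxs]; ring
      rw [hval]
      have := hpos x hxs
      positivity
    rw [hPs] at hPr
    nlinarith [Real.exp_pos (A t)]
  -- main conclusion
  intro t ht
  have hts : s ≤ t := ht
  constructor
  · -- lower bound
    -- Φ = (lam*y1 + y1d) * exp (A - lam*(·-s))
    have hΦ : (lam * y1 s + y1d s) * Real.exp (A s - lam * (s - s)) ≤
        (lam * y1 t + y1d t) * Real.exp (A t - lam * (t - s)) := by
      refine mono_aux (fun x => (lam * y1 x + y1d x) * Real.exp (A x - lam * (x - s))) (fun x => (lam * y1d x + y1dd x) * Real.exp (A x - lam * (x - s))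
        + (lam * y1 x + y1d x) * (Real.exp (A x - lam * (x - s)) * (aa x - lam * 1))) s t hts ?_ ?_
      · intro x hx
        exact (((hy1 x hx.1).const_mul lam).add (hy1d x hx.1)).mul
          (((hA x).sub (((hasDerivAt_id x).sub_const s).const_mul lam)).exp)
      · intro x hx
        have hxs : s ≤ x := hx.1.le
        have hval : (lam * y1d x + y1dd x) * Real.exp (A x - lam * (x - s))
            + (lam * y1 x + y1d x) * (Real.exp (A x - lam * (x - s)) * (aa x - lam * 1))
            = Real.exp (A x - lam * (x - s)) * (a x * (lam * y1 x)) := by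
          rw [haa_eq x hxs, hodd x hxs]; ring
        beta_reduce
        rw [hval]
        have h1 := ha0 x (le_trans hs hxs)
        have h2 := hpos x hxs
        positivity
    rw [hinit, hinit', hAs] at hΦ
    simp only [sub_self, mul_zero, sub_zero, Real.exp_zero, add_zero, mul_one] at hΦ
    -- Ψ = (lam*y1 - y1d) * exp (lam*(·-s))
    have hΨ : (lam * y1 s - y1d s) * Real.exp (lam * (s - s)) ≤
        (lam * y1 t - y1d t) * Real.exp (lam * (t - s)) := by
      refine mono_aux (fun x => (lam * y1 x - y1d x) * Real.exp (lam * (x - s))) (fun x => (lam * y1d x - y1dd x) * Real.exp (lam * (x - s))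
        + (lam * y1 x - y1d x) * (Real.exp (lam * (x - s)) * (lam * 1))) s t hts ?_ ?_
      · intro x hx
        exact (((hy1 x hx.1).const_mul lam).sub (hy1d x hx.1)).mul
          ((((hasDerivAt_id x).sub_const s).const_mul lam).exp)
      · intro x hx
        have hxs : s ≤ x := hx.1.le
        have hval : (lam * y1d x - y1dd x) * Real.exp (lam * (x - s))
            + (lam * y1 x - y1d x) * (Real.exp (lam * (x - s)) * (lam * 1))
            = Real.exp (lam * (x - s)) * (a x * y1d x) := by
          rw [hodd x hxs]; ring
        beta_reduce
        rw [hval]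
        have h1 := ha0 x (le_trans hs hxs)
        have h2 := hd x hxs
        positivity
    rw [hinit, hinit', sub_self, mul_zero, Real.exp_zero, mul_one, mul_one, sub_zero] at hΨ
    -- extract F bound
    have hexpAt := Real.exp_pos (A t - lam * (t - s))
    have hF : lam * Real.exp (lam * (t - s) - M) ≤ lam * y1 t + y1d t := by
      have h1 : lam * Real.exp (lam * (t - s) - A t) ≤ lam * y1 t + y1d t := by
        have h2 := mul_le_mul_of_nonneg_right hΦ (Real.exp_pos (lam * (t - s) - A t)).le
        rw [mul_assoc, ← Real.exp_add] at h2
        have : A t - lam * (t - s) + (lam * (t - s) - A t) = 0 := by ring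
        rw [this, Real.exp_zero, mul_one] at h2
        linarith
      have h3 : Real.exp (lam * (t - s) - M) ≤ Real.exp (lam * (t - s) - A t) :=
        Real.exp_le_exp.2 (by have := hAM t hts; linarith)
      nlinarith
    have hG : lam * Real.exp (-(lam * (t - s))) ≤ lam * y1 t - y1d t := by
      have h2 := mul_le_mul_of_nonneg_right hΨ (Real.exp_pos (-(lam * (t - s)))).le
      rw [mul_assoc, ← Real.exp_add, add_neg_cancel, Real.exp_zero, mul_one] at h2
      exact h2
    -- combine
    rw [Real.cosh_eq]
    rw [Real.exp_sub] at hF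
    have hexpM : Real.exp (-M) ≤ 1 := Real.exp_le_one_iff.2 (by linarith)
    have hexpMpos := Real.exp_pos (-M)
    have hexpnx := Real.exp_pos (-(lam * (t - s)))
    have hexpx := Real.exp_pos (lam * (t - s))
    have hMM : Real.exp M * Real.exp (-M) = 1 := by
      rw [← Real.exp_add, add_neg_cancel, Real.exp_zero]
    have key : 0 ≤ Real.exp (-(lam * (t - s))) * (1 - Real.exp (-M)) := by nlinarith
    have hFM : lam * (Real.exp (lam * (t - s)) * Real.exp (-M)) ≤ lam * y1 t + y1d t := by
      have : Real.exp (lam * (t - s)) / Real.exp M = Real.exp (lam * (t - s)) * Real.exp (-M) := by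
        rw [div_eq_mul_inv, ← Real.exp_neg]
      rw [this] at hF; exact hF
    nlinarith
  · -- upper bound
    -- W ≥ 0 on [s, t]
    have hW : ∀ u : ℝ, s ≤ u →
        0 ≤ y1 u * (lam * Real.sinh (lam * (u - s))) - y1d u * Real.cosh (lam * (u - s)) := by
      intro u hu
      have h0 : y1 s * (lam * Real.sinh (lam * (s - s))) - y1d s * Real.cosh (lam * (s - s)) = 0 := by
        rw [hinit, hinit', sub_self, mul_zero, Real.sinh_zero]; ring
      have key : y1 s * (lam * Real.sinh (lam * (s - s))) - y1d s * Real.cosh (lam * (s - s)) ≤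
          y1 u * (lam * Real.sinh (lam * (u - s))) - y1d u * Real.cosh (lam * (u - s)) :=
        mono_aux (fun x => y1 x * (lam * Real.sinh (lam * (x - s)))
          - y1d x * Real.cosh (lam * (x - s)))
        (fun x => (y1d x * (lam * Real.sinh (lam * (x - s)))
          + y1 x * (lam * (Real.cosh (lam * (x - s)) * (lam * 1))))
          - (y1dd x * Real.cosh (lam * (x - s))
          + y1d x * (Real.sinh (lam * (x - s)) * (lam * 1)))) s u hu ?hd ?hnn
      case _ => rw [h0] at key; exact key
      case hd =>
        intro x hx
        exact ((hy1 x hx.1).mul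
          (((((hasDerivAt_id x).sub_const s).const_mul lam).sinh).const_mul lam)).sub
          ((hy1d x hx.1).mul ((((hasDerivAt_id x).sub_const s).const_mul lam).cosh))
      case hnn =>
        intro x hx
        have hxs : s ≤ x := hx.1.le
        have hval : (y1d x * (lam * Real.sinh (lam * (x - s)))
            + y1 x * (lam * (Real.cosh (lam * (x - s)) * (lam * 1))))
            - (y1dd x * Real.cosh (lam * (x - s))
            + y1d x * (Real.sinh (lam * (x - s)) * (lam * 1)))
            = Real.cosh (lam * (x - s)) * (a x * y1d x) := by
          rw [hodd x hxs]; ring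
        beta_reduce
        rw [hval]
        have h1 := ha0 x (le_trans hs hxs)
        have h2 := hd x hxs
        have h3 := Real.cosh_pos (lam * (x - s))
        positivity
    -- ratio y1/cosh is nonincreasing
    have hcpos : ∀ u : ℝ, 0 < Real.cosh (lam * (u - s)) := fun u => Real.cosh_pos _
    have hR : -(y1 s / Real.cosh (lam * (s - s))) ≤ -(y1 t / Real.cosh (lam * (t - s))) := by
      refine mono_aux (fun x => -(y1 x / Real.cosh (lam * (x - s)))) (fun x => -((y1d x * Real.cosh (lam * (x - s))
        - y1 x * (Real.sinh (lam * (x - s)) * (lam * 1))) / (Real.cosh (lam * (x - s))) ^ 2))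
        s t hts ?_ ?_
      · intro x hx
        exact ((hy1 x hx.1).div ((((hasDerivAt_id x).sub_const s).const_mul lam).cosh)
          (hcpos x).ne').neg
      · intro x hx
        have hxs : s ≤ x := hx.1.le
        have hWx := hW x hxs
        have hc2 : (0:ℝ) < (Real.cosh (lam * (x - s))) ^ 2 := by positivity
        rw [neg_nonneg]
        apply div_nonpos_of_nonpos_of_nonneg _ hc2.le
        nlinarith
    rw [hinit, sub_self, mul_zero, Real.cosh_zero, div_one, neg_le_neg_iff] at hR
    rw [div_le_one (hcpos t)] at hR
    exact hR
end

section
/- Let a : [0,∞) → ℝ be continuous, nonnegative, and integrable with ‖a‖_{L¹} = ∫₀^∞ a(t) dt. Let λ > 0, s ≥ 0, and let y₁, y₂ solve y'' + a(t) y' − λ² y = 0 on [s,∞) with y₁(s)=1, y₁'(s)=0, y₂(s)=0, y₂'(s)=1. Then e^{‖a‖_{L¹}} sinh(λ(t−s))/λ ≥ y₂(t) ≥ e^{−2‖a‖_{L¹}} sinh(λ(t−s))/λ for all t ≥ s. -/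
open Set Real MeasureTheory intervalIntegral

private lemma aux_mono {S : Set ℝ} (hS : Convex ℝ S) {f f' : ℝ → ℝ}
    (hc : ContinuousOn f S) (hd : ∀ t ∈ interior S, HasDerivAt f (f' t) t)
    (h0 : ∀ t ∈ interior S, 0 ≤ f' t) : MonotoneOn f S :=
  monotoneOn_of_deriv_nonneg hS hc
    (fun x hx => (hd x hx).differentiableAt.differentiableWithinAt)
    (fun x hx => by rw [(hd x hx).deriv]; exact h0 x hx)

private lemma aux_anti {S : Set ℝ} (hS : Convex ℝ S) {f f' : ℝ → ℝ}
    (hc : ContinuousOn f S) (hd : ∀ t ∈ interior S, HasDerivAt f (f' t) t)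
    (h0 : ∀ t ∈ interior S, f' t ≤ 0) : AntitoneOn f S :=
  antitoneOn_of_deriv_nonpos hS hc
    (fun x hx => (hd x hx).differentiableAt.differentiableWithinAt)
    (fun x hx => by rw [(hd x hx).deriv]; exact h0 x hx)

theorem y2_two_sided_bound (a : ℝ → ℝ) (ha : ContinuousOn a (Ici 0))
    (ha0 : ∀ t ∈ Ici (0:ℝ), 0 ≤ a t)
    (haL1 : IntegrableOn a (Ici 0))
    (M : ℝ) (hM : M = ∫ t in Ici (0:ℝ), a t)
    (lam : ℝ) (hlam : 0 < lam) (s : ℝ) (hs : 0 ≤ s)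
    (y1 y1d y1dd y2 y2d y2dd : ℝ → ℝ)
    (hy1 : ∀ t ∈ Ici s, HasDerivAt y1 (y1d t) t)
    (hy1d : ∀ t ∈ Ici s, HasDerivAt y1d (y1dd t) t)
    (hy1dd : ContinuousOn y1dd (Ici s))
    (hy2 : ∀ t ∈ Ici s, HasDerivAt y2 (y2d t) t)
    (hy2d : ∀ t ∈ Ici s, HasDerivAt y2d (y2dd t) t)
    (hy2dd : ContinuousOn y2dd (Ici s))
    (hode1 : ∀ t ∈ Ici s, y1dd t + a t * y1d t - lam ^ 2 * y1 t = 0)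
    (hode2 : ∀ t ∈ Ici s, y2dd t + a t * y2d t - lam ^ 2 * y2 t = 0)
    (h1 : y1 s = 1) (h1' : y1d s = 0) (h2 : y2 s = 0) (h2' : y2d s = 1) :
    ∀ t ∈ Ici s,
      Real.exp (-2 * M) * (Real.sinh (lam * (t - s)) / lam) ≤ y2 t ∧
      y2 t ≤ Real.exp M * (Real.sinh (lam * (t - s)) / lam) := by
  have hM0 : 0 ≤ M := by
    rw [hM]; exact setIntegral_nonneg measurableSet_Ici ha0
  set B : ℝ → ℝ := fun r => ∫ u in s..r, a u with hBdef
  -- basic integrability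
  have haInt : ∀ r, s ≤ r → IntervalIntegrable a volume s r := by
    intro r hr
    rw [intervalIntegrable_iff_integrableOn_Ioc_of_le hr]
    exact haL1.mono_set (fun x hx => le_trans hs hx.1.le)
  -- derivative of B on Ioi s
  have hBd : ∀ r ∈ Ioi s, HasDerivAt B (a r) r := by
    intro r hr
    have h0r : (0:ℝ) < r := lt_of_le_of_lt hs hr
    refine intervalIntegral.integral_hasDerivAt_right (haInt r hr.le) ?_ ?_
    · exact ContinuousOn.stronglyMeasurableAtFilter isOpen_Ioi
        (ha.mono (fun x hx => hx.le)) r h0r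
    · exact ha.continuousAt (Ici_mem_nhds h0r)
  -- continuity of B on Ici s
  have hBc : ContinuousOn B (Ici s) := by
    intro r hr
    rcases eq_or_lt_of_le (show s ≤ r from hr) with h | h
    · have hint : IntervalIntegrable a volume (min s s) (max s (s+1)) := by
        simpa using haInt (s+1) (by linarith)
      have hc : ContinuousWithinAt B (Icc s (s+1)) r :=
        intervalIntegral.continuousWithinAt_primitive (measure_singleton r) hint
      refine hc.mono_of_mem_nhdsWithin ?_
      have h' : r = s := h.symm
      subst h'
      have hIcc : Icc r (r+1) = Ici r ∩ Iic (r+1) := (Ici_inter_Iic).symm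
      rw [hIcc]
      exact Filter.inter_mem self_mem_nhdsWithin
        (mem_nhdsWithin_of_mem_nhds (Iic_mem_nhds (by linarith)))
    · exact ((hBd r h).continuousAt).continuousWithinAt
  have hB0 : ∀ r ∈ Ici s, 0 ≤ B r := fun r hr =>
    intervalIntegral.integral_nonneg hr (fun u hu => ha0 u (le_trans hs hu.1))
  have hBM : ∀ r ∈ Ici s, B r ≤ M := by
    intro r hr
    rw [hM]
    have hBr : B r = ∫ u in Ioc s r, a u := intervalIntegral.integral_of_le hr
    rw [hBr]
    refine setIntegral_mono_set haL1 ?_ ?_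
    · exact Filter.eventually_of_mem (self_mem_ae_restrict measurableSet_Ici)
        (fun x hx => ha0 x hx)
    · exact Filter.Eventually.of_forall (fun x hx => le_trans hs hx.1.le)
  have hBs : B s = 0 := intervalIntegral.integral_same
  -- continuity of y2, y2d on Ici s
  have hy2Cont : ContinuousOn y2 (Ici s) := fun r hr =>
    ((hy2 r hr).continuousAt).continuousWithinAt
  have hy2dCont : ContinuousOn y2d (Ici s) := fun r hr =>
    ((hy2d r hr).continuousAt).continuousWithinAt
  -- positivity of y2d
  have hy2dpos : ∀ r ∈ Ici s, 0 < y2d r := by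
    by_contra hcon
    push_neg at hcon
    obtain ⟨r0, hr0, hr0'⟩ := hcon
    set S : Set ℝ := Ici s ∩ y2d ⁻¹' Iic 0 with hSdef
    have hSne : S.Nonempty := ⟨r0, hr0, hr0'⟩
    have hSclosed : IsClosed S :=
      hy2dCont.preimage_isClosed_of_isClosed isClosed_Ici isClosed_Iic
    have hSbdd : BddBelow S := ⟨s, fun x hx => hx.1⟩
    set t1 := sInf S with ht1def
    have ht1S : t1 ∈ S := hSclosed.csInf_mem hSne hSbdd
    have hst1 : s ≤ t1 := ht1S.1
    have hne : s ≠ t1 := by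
      intro h
      have : y2d s ≤ 0 := by rw [h]; exact ht1S.2
      rw [h2'] at this; linarith
    have hlt : s < t1 := lt_of_le_of_ne hst1 hne
    have hpos : ∀ r ∈ Ico s t1, 0 ≤ y2d r := by
      intro r hr
      by_contra hneg
      push_neg at hneg
      exact notMem_of_lt_csInf hr.2 hSbdd ⟨hr.1, hneg.le⟩
    -- y2 monotone on Icc s t1
    have hy2m : MonotoneOn y2 (Icc s t1) := by
      refine aux_mono (f' := y2d) (convex_Icc s t1) (hy2Cont.mono (Icc_subset_Ici_self)) ?_ ?_
      · intro r hr; rw [interior_Icc] at hr; exact hy2 r hr.1.le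
      · intro r hr; rw [interior_Icc] at hr; exact hpos r ⟨hr.1.le, hr.2⟩
    have hy2nn1 : ∀ r ∈ Icc s t1, 0 ≤ y2 r := by
      intro r hr
      have := hy2m (left_mem_Icc.mpr hst1) hr hr.1
      rw [h2] at this; exact this
    set V : ℝ → ℝ := fun r => Real.exp (B r) * y2d r with hVdef
    have hVc : ContinuousOn V (Icc s t1) :=
      ((Real.continuous_exp.comp_continuousOn (hBc.mono Icc_subset_Ici_self)).mul
        (hy2dCont.mono Icc_subset_Ici_self))
    have hVd : ∀ r ∈ interior (Icc s t1),
        HasDerivAt V (Real.exp (B r) * (lam ^ 2 * y2 r)) r := by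
      intro r hr
      rw [interior_Icc] at hr
      have hrI : r ∈ Ici s := hr.1.le
      have hd1 : HasDerivAt (fun x => Real.exp (B x)) (Real.exp (B r) * a r) r :=
        (hBd r hr.1).exp
      have h := hd1.mul (hy2d r hrI)
      have hode := hode2 r hrI
      refine h.congr_deriv (Eq.symm ?_)
      linear_combination (-Real.exp (B r)) * hode
    have hVm : MonotoneOn V (Icc s t1) := by
      refine aux_mono (convex_Icc s t1) hVc hVd ?_
      intro r hr
      have hr' := hr; rw [interior_Icc] at hr'
      have := hy2nn1 r ⟨hr'.1.le, hr'.2.le⟩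
      positivity
    have hle := hVm (left_mem_Icc.mpr hst1) (right_mem_Icc.mpr hst1) hst1
    have hVs : V s = 1 := by simp [hVdef, hBs, h2']
    have hVt1 : V t1 ≤ 0 := by
      have := ht1S.2
      have hep := Real.exp_pos (B t1)
      simp only [hVdef]
      exact mul_nonpos_of_nonneg_of_nonpos hep.le this
    rw [hVs] at hle
    linarith
  -- monotonicity / nonnegativity of y2
  have hy2mono : MonotoneOn y2 (Ici s) := by
    refine aux_mono (f' := y2d) (convex_Ici s) hy2Cont ?_ ?_
    · intro r hr; rw [interior_Ici] at hr; exact hy2 r (mem_Ici.mpr hr.le)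
    · intro r hr; rw [interior_Ici] at hr; exact (hy2dpos r (mem_Ici.mpr hr.le)).le
  have hy2nn : ∀ r ∈ Ici s, 0 ≤ y2 r := by
    intro r hr
    have := hy2mono (self_mem_Ici) hr hr
    rw [h2] at this; exact this
  -- lower bound on Q = y2d + lam*y2
  have hQ : ∀ r ∈ Ici s, Real.exp (lam * (r - s) - M) ≤ y2d r + lam * y2 r := by
    set G1 : ℝ → ℝ := fun r => Real.exp (B r - lam * (r - s)) * (y2d r + lam * y2 r)
      with hG1def
    have hG1c : ContinuousOn G1 (Ici s) := by
      refine ContinuousOn.mul ?_ ?_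
      · exact Real.continuous_exp.comp_continuousOn
          (hBc.sub (Continuous.continuousOn (continuous_const.mul (continuous_id.sub continuous_const))))
      · exact hy2dCont.add (continuousOn_const.mul hy2Cont)
    have hG1d : ∀ r ∈ interior (Ici s),
        HasDerivAt G1 (Real.exp (B r - lam * (r - s)) * (a r * (lam * y2 r))) r := by
      intro r hr
      rw [interior_Ici] at hr
      have hrI : r ∈ Ici s := mem_Ici.mpr hr.le
      have hlin : HasDerivAt (fun x => B x - lam * (x - s)) (a r - lam * 1) r :=
        (hBd r hr).sub (((hasDerivAt_id r).sub_const s).const_mul lam)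
      have hexp := hlin.exp
      have hQd : HasDerivAt (fun x => y2d x + lam * y2 x) (y2dd r + lam * y2d r) r :=
        (hy2d r hrI).add ((hy2 r hrI).const_mul lam)
      have h := hexp.mul hQd
      have hode := hode2 r hrI
      refine h.congr_deriv (Eq.symm ?_)
      linear_combination (-Real.exp (B r - lam * (r - s))) * hode
    have hG1m : MonotoneOn G1 (Ici s) := by
      refine aux_mono (convex_Ici s) hG1c hG1d ?_
      intro r hr
      rw [interior_Ici] at hr
      have h1 := ha0 r (le_trans hs hr.le)
      have h2 := hy2nn r (mem_Ici.mpr hr.le)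
      positivity
    intro r hr
    have hmono := hG1m self_mem_Ici hr hr
    have hG1s : G1 s = 1 := by simp [hG1def, hBs, h2, h2']
    rw [hG1s] at hmono
    have hE1pos : 0 < Real.exp (B r - lam * (r - s)) := Real.exp_pos _
    have key : Real.exp (B r - lam * (r - s)) * Real.exp (lam * (r - s) - M)
        ≤ Real.exp (B r - lam * (r - s)) * (y2d r + lam * y2 r) := by
      have e1 : Real.exp (B r - lam * (r - s)) * Real.exp (lam * (r - s) - M)
          = Real.exp (B r - M) := by
        rw [← Real.exp_add]; congr 1; ring
      rw [e1]
      calc Real.exp (B r - M) ≤ 1 := Real.exp_le_one_iff.mpr (by linarith [hBM r hr])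
        _ ≤ G1 r := hmono
    exact le_of_mul_le_mul_left key hE1pos
  -- upper bound on P = y2d - lam*y2
  have hP : ∀ r ∈ Ici s, y2d r - lam * y2 r ≤ Real.exp (-(lam * (r - s))) := by
    set G2 : ℝ → ℝ := fun r => Real.exp (B r + lam * (r - s)) * (y2d r - lam * y2 r)
      with hG2def
    have hG2c : ContinuousOn G2 (Ici s) := by
      refine ContinuousOn.mul ?_ ?_
      · exact Real.continuous_exp.comp_continuousOn
          (hBc.add (Continuous.continuousOn (continuous_const.mul (continuous_id.sub continuous_const))))
      · exact hy2dCont.sub (continuousOn_const.mul hy2Cont)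
    have hG2d : ∀ r ∈ interior (Ici s),
        HasDerivAt G2 (-(Real.exp (B r + lam * (r - s)) * (a r * (lam * y2 r)))) r := by
      intro r hr
      rw [interior_Ici] at hr
      have hrI : r ∈ Ici s := mem_Ici.mpr hr.le
      have hlin : HasDerivAt (fun x => B x + lam * (x - s)) (a r + lam * 1) r :=
        (hBd r hr).add (((hasDerivAt_id r).sub_const s).const_mul lam)
      have hexp := hlin.exp
      have hPd : HasDerivAt (fun x => y2d x - lam * y2 x) (y2dd r - lam * y2d r) r :=
        (hy2d r hrI).sub ((hy2 r hrI).const_mul lam)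
      have h := hexp.mul hPd
      have hode := hode2 r hrI
      refine h.congr_deriv (Eq.symm ?_)
      linear_combination (-Real.exp (B r + lam * (r - s))) * hode
    have hG2a : AntitoneOn G2 (Ici s) := by
      refine aux_anti (convex_Ici s) hG2c hG2d ?_
      intro r hr
      rw [interior_Ici] at hr
      have h1 := ha0 r (le_trans hs hr.le)
      have h2 := hy2nn r (mem_Ici.mpr hr.le)
      have : 0 ≤ Real.exp (B r + lam * (r - s)) * (a r * (lam * y2 r)) := by positivity
      linarith
    intro r hr
    have hmono := hG2a self_mem_Ici hr hr
    have hG2s : G2 s = 1 := by simp [hG2def, hBs, h2, h2']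
    rw [hG2s] at hmono
    have hE2pos : 0 < Real.exp (B r + lam * (r - s)) := Real.exp_pos _
    have key : Real.exp (B r + lam * (r - s)) * (y2d r - lam * y2 r)
        ≤ Real.exp (B r + lam * (r - s)) * Real.exp (-(lam * (r - s))) := by
      have e1 : Real.exp (B r + lam * (r - s)) * Real.exp (-(lam * (r - s)))
          = Real.exp (B r) := by
        rw [← Real.exp_add]; congr 1; ring
      rw [e1]
      calc Real.exp (B r + lam * (r - s)) * (y2d r - lam * y2 r) ≤ 1 := hmono
        _ ≤ Real.exp (B r) := Real.one_le_exp (hB0 r hr)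
    exact le_of_mul_le_mul_left key hE2pos
  -- now integrate once more
  intro t ht
  have hts : s ≤ t := ht
  have hsinh : 0 ≤ Real.sinh (lam * (t - s)) :=
    Real.sinh_nonneg_iff.mpr (by nlinarith)
  have hCexp : ∀ c : ℝ, Continuous (fun x : ℝ => Real.exp (c * (x - s))) :=
    fun c => Real.continuous_exp.comp (continuous_const.mul (continuous_id.sub continuous_const))
  have hCexp' : ∀ c : ℝ, Continuous (fun x : ℝ => Real.exp (-(c * (x - s)))) :=
    fun c => Real.continuous_exp.comp ((continuous_const.mul (continuous_id.sub continuous_const)).neg)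
  have hlam2 : (0:ℝ) < 2 * lam := by linarith
  have hd : Real.sinh (lam * (t - s)) / lam
      = (Real.exp (lam * (t - s)) - Real.exp (-(lam * (t - s)))) / (2 * lam) := by
    rw [Real.sinh_eq]; ring
  constructor
  · -- lower bound
    set F1 : ℝ → ℝ := fun r =>
      2 * lam * (Real.exp (lam * (r - s)) * y2 r)
        - Real.exp (-M) * Real.exp (2 * lam * (r - s)) with hF1def
    have hF1c : ContinuousOn F1 (Ici s) := by
      refine ContinuousOn.sub ?_ ?_
      · exact continuousOn_const.mul ((hCexp lam).continuousOn.mul hy2Cont)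
      · exact (continuous_const.mul (hCexp (2 * lam))).continuousOn
    have hF1d : ∀ r ∈ interior (Ici s),
        HasDerivAt F1 (2 * lam * (Real.exp (lam * (r - s)) * (lam * 1) * y2 r
          + Real.exp (lam * (r - s)) * y2d r)
          - Real.exp (-M) * (Real.exp (2 * lam * (r - s)) * (2 * lam * 1))) r := by
      intro r hr
      rw [interior_Ici] at hr
      have h1 : HasDerivAt (fun x => Real.exp (lam * (x - s)))
          (Real.exp (lam * (r - s)) * (lam * 1)) r :=
        (((hasDerivAt_id r).sub_const s).const_mul lam).exp
      have h2e : HasDerivAt (fun x => Real.exp (2 * lam * (x - s)))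
          (Real.exp (2 * lam * (r - s)) * (2 * lam * 1)) r :=
        (((hasDerivAt_id r).sub_const s).const_mul (2 * lam)).exp
      exact ((h1.mul (hy2 r (mem_Ici.mpr hr.le))).const_mul (2 * lam)).sub
        (h2e.const_mul (Real.exp (-M)))
    have hF1m : MonotoneOn F1 (Ici s) := by
      refine aux_mono (convex_Ici s) hF1c hF1d ?_
      intro r hr
      rw [interior_Ici] at hr
      have hq := hQ r (mem_Ici.mpr hr.le)
      have hmul : Real.exp (lam * (r - s)) * Real.exp (lam * (r - s) - M)
          ≤ Real.exp (lam * (r - s)) * (y2d r + lam * y2 r) :=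
        mul_le_mul_of_nonneg_left hq (Real.exp_pos _).le
      have eid : Real.exp (lam * (r - s)) * Real.exp (lam * (r - s) - M)
          = Real.exp (-M) * Real.exp (2 * lam * (r - s)) := by
        rw [← Real.exp_add, ← Real.exp_add]; congr 1; ring
      rw [eid] at hmul
      have h3 := mul_le_mul_of_nonneg_left hmul (le_of_lt hlam2)
      nlinarith [h3]
    have hmono := hF1m self_mem_Ici ht hts
    have hF1s : F1 s = -Real.exp (-M) := by
      simp [hF1def, h2]
    rw [hF1s] at hmono
    simp only [hF1def] at hmono
    have step1 : Real.exp (-M) * (Real.sinh (lam * (t - s)) / lam) ≤ y2 t := by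
      rw [hd, mul_div_assoc', div_le_iff₀ hlam2]
      set X := Real.exp (lam * (t - s)) with hX
      set Y := Real.exp (-(lam * (t - s))) with hY
      have hXpos : 0 < X := Real.exp_pos _
      have e1 : X * X = Real.exp (2 * lam * (t - s)) := by
        rw [hX, ← Real.exp_add]; congr 1; ring
      have e2 : X * Y = 1 := by
        rw [hX, hY, ← Real.exp_add]; simp
      refine le_of_mul_le_mul_left ?_ hXpos
      have hcalc : X * (Real.exp (-M) * (X - Y))
          = Real.exp (-M) * Real.exp (2 * lam * (t - s)) - Real.exp (-M) := by
        have : X * (Real.exp (-M) * (X - Y))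
            = Real.exp (-M) * (X * X) - Real.exp (-M) * (X * Y) := by ring
        rw [this, e1, e2]; ring
      rw [hcalc]
      nlinarith [hmono]
    have hfac : Real.exp (-2 * M) ≤ Real.exp (-M) :=
      Real.exp_le_exp.mpr (by linarith)
    have hnn : 0 ≤ Real.sinh (lam * (t - s)) / lam := by positivity
    calc Real.exp (-2 * M) * (Real.sinh (lam * (t - s)) / lam)
        ≤ Real.exp (-M) * (Real.sinh (lam * (t - s)) / lam) :=
          mul_le_mul_of_nonneg_right hfac hnn
      _ ≤ y2 t := step1
  · -- upper bound
    set F2 : ℝ → ℝ := fun r =>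
      2 * lam * (Real.exp (-(lam * (r - s))) * y2 r)
        + Real.exp (-(2 * lam * (r - s))) with hF2def
    have hF2c : ContinuousOn F2 (Ici s) := by
      refine ContinuousOn.add ?_ ((hCexp' (2 * lam)).continuousOn)
      exact continuousOn_const.mul ((hCexp' lam).continuousOn.mul hy2Cont)
    have hF2d : ∀ r ∈ interior (Ici s),
        HasDerivAt F2 (2 * lam * (Real.exp (-(lam * (r - s))) * (-(lam * 1)) * y2 r
          + Real.exp (-(lam * (r - s))) * y2d r)
          + Real.exp (-(2 * lam * (r - s))) * (-(2 * lam * 1))) r := by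
      intro r hr
      rw [interior_Ici] at hr
      have h1 : HasDerivAt (fun x => Real.exp (-(lam * (x - s))))
          (Real.exp (-(lam * (r - s))) * (-(lam * 1))) r :=
        ((((hasDerivAt_id r).sub_const s).const_mul lam).neg).exp
      have h2e : HasDerivAt (fun x => Real.exp (-(2 * lam * (x - s))))
          (Real.exp (-(2 * lam * (r - s))) * (-(2 * lam * 1))) r :=
        ((((hasDerivAt_id r).sub_const s).const_mul (2 * lam)).neg).exp
      exact ((h1.mul (hy2 r (mem_Ici.mpr hr.le))).const_mul (2 * lam)).add h2e
    have hF2a : AntitoneOn F2 (Ici s) := by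
      refine aux_anti (convex_Ici s) hF2c hF2d ?_
      intro r hr
      rw [interior_Ici] at hr
      have hp := hP r (mem_Ici.mpr hr.le)
      have hmul : Real.exp (-(lam * (r - s))) * (y2d r - lam * y2 r)
          ≤ Real.exp (-(lam * (r - s))) * Real.exp (-(lam * (r - s))) :=
        mul_le_mul_of_nonneg_left hp (Real.exp_pos _).le
      have eid : Real.exp (-(lam * (r - s))) * Real.exp (-(lam * (r - s)))
          = Real.exp (-(2 * lam * (r - s))) := by
        rw [← Real.exp_add]; congr 1; ring
      rw [eid] at hmul
      have h3 := mul_le_mul_of_nonneg_left hmul (le_of_lt hlam2)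
      nlinarith [h3]
    have hmono := hF2a self_mem_Ici ht hts
    have hF2s : F2 s = 1 := by
      simp [hF2def, h2]
    rw [hF2s] at hmono
    simp only [hF2def] at hmono
    have step1 : y2 t ≤ Real.sinh (lam * (t - s)) / lam := by
      rw [hd, le_div_iff₀ hlam2]
      set X := Real.exp (lam * (t - s)) with hX
      set Y := Real.exp (-(lam * (t - s))) with hY
      have hYpos : 0 < Y := Real.exp_pos _
      have e2 : Y * X = 1 := by
        rw [hX, hY, ← Real.exp_add]; simp
      have e3 : Y * Y = Real.exp (-(2 * lam * (t - s))) := by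
        rw [hY, ← Real.exp_add]; congr 1; ring
      refine le_of_mul_le_mul_left ?_ hYpos
      have hcalc : Y * (X - Y) = 1 - Real.exp (-(2 * lam * (t - s))) := by
        have : Y * (X - Y) = Y * X - Y * Y := by ring
        rw [this, e2, e3]
      rw [hcalc]
      nlinarith [hmono]
    calc y2 t ≤ Real.sinh (lam * (t - s)) / lam := step1
      _ = 1 * (Real.sinh (lam * (t - s)) / lam) := (one_mul _).symm
      _ ≤ Real.exp M * (Real.sinh (lam * (t - s)) / lam) := by
          have h1M : (1:ℝ) ≤ Real.exp M := Real.one_le_exp hM0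
          have hnn : 0 ≤ Real.sinh (lam * (t - s)) / lam := by positivity
          exact mul_le_mul_of_nonneg_right h1M hnn
end

section
/- For n ≥ 2 and φ(x) = ∫_{S^{n−1}} e^{x·ω} dS_ω, there exist constants 0 < c ≤ C such that c(1+|x|)^{−(n−1)/2} e^{|x|} ≤ φ(x) ≤ C(1+|x|)^{−(n−1)/2} e^{|x|} for all x ∈ ℝⁿ. -/
open MeasureTheory Metric Set Pointwise

noncomputable section SphereAsymp

variable (n : ℕ)

lemma euclidean_volume_box (s : Fin n → Set ℝ) (hs : ∀ i, MeasurableSet (s i)) :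
    volume {y : EuclideanSpace ℝ (Fin n) | ∀ i, y i ∈ s i} = ∏ i, volume (s i) := by
  have h := (EuclideanSpace.volume_preserving_symm_measurableEquiv_toLp (Fin n)).measure_preimage
    (s := Set.pi Set.univ s) (MeasurableSet.univ_pi hs).nullMeasurableSet
  rw [← volume_pi_pi s, ← h]
  congr 1
  ext y
  simp [Set.mem_pi]

lemma euclid_norm_sq (y : EuclideanSpace ℝ (Fin n)) : ‖y‖ ^ 2 = ∑ i, (y i) ^ 2 := by
  rw [EuclideanSpace.norm_eq, Real.sq_sqrt (by positivity)]
  simp [Real.norm_eq_abs, sq_abs]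

lemma coord_sq_le_norm_sq (y : EuclideanSpace ℝ (Fin n)) (i : Fin n) :
    (y i) ^ 2 ≤ ‖y‖ ^ 2 := by
  rw [euclid_norm_sq]
  exact Finset.single_le_sum (fun j _ => sq_nonneg (y j)) (Finset.mem_univ i)

lemma coord_abs_le_norm (y : EuclideanSpace ℝ (Fin n)) (i : Fin n) : |y i| ≤ ‖y‖ := by
  have := coord_sq_le_norm_sq n y i
  nlinarith [abs_nonneg (y i), norm_nonneg y, sq_abs (y i)]

def pexp : ℝ := ((n : ℝ) - 1) / 2

lemma sqrt_pow_cast (hn : 1 ≤ n) {t : ℝ} (ht : 0 ≤ t) :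
    Real.sqrt t ^ (n - 1) = t ^ pexp n := by
  rw [← Real.rpow_natCast (Real.sqrt t) (n - 1), Real.sqrt_eq_rpow, ← Real.rpow_mul ht]
  congr 1
  rw [pexp, Nat.cast_sub hn]
  ring

variable [NeZero n]

abbrev Esp := EuclideanSpace ℝ (Fin n)

def capSet (t : ℝ) : Set (sphere (0 : EuclideanSpace ℝ (Fin n)) 1) :=
  {ω | 1 - t ≤ (ω : EuclideanSpace ℝ (Fin n)) 0}

lemma capSet_measurable (t : ℝ) : MeasurableSet (capSet n t) := by
  have : Continuous fun ω : sphere (0 : EuclideanSpace ℝ (Fin n)) 1 =>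
      (ω : EuclideanSpace ℝ (Fin n)) 0 := by
    exact (EuclideanSpace.proj (0 : Fin n)).continuous.comp continuous_subtype_val
  exact measurableSet_le measurable_const this.measurable

lemma sector_eq (t : ℝ) :
    Set.Ioo (0:ℝ) 1 • (Subtype.val '' capSet n t) =
      {y : EuclideanSpace ℝ (Fin n) | 0 < ‖y‖ ∧ ‖y‖ < 1 ∧ (1 - t) * ‖y‖ ≤ y 0} := by
  ext y
  constructor
  · rintro ⟨c, hc, x, ⟨ω, hω, rfl⟩, rfl⟩
    have hx : ‖(ω : EuclideanSpace ℝ (Fin n))‖ = 1 := mem_sphere_zero_iff_norm.mp ω.2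
    have hn : ‖c • (ω : EuclideanSpace ℝ (Fin n))‖ = c := by
      rw [norm_smul, hx, mul_one, Real.norm_eq_abs, abs_of_pos hc.1]
    refine ⟨by rw [hn]; exact hc.1, by rw [hn]; exact hc.2, ?_⟩
    have : (c • (ω : EuclideanSpace ℝ (Fin n))) 0 = c * (ω : EuclideanSpace ℝ (Fin n)) 0 := rfl
    have key : (1 - t) * c ≤ (c • (ω : EuclideanSpace ℝ (Fin n))) 0 := by
      rw [this, mul_comm]
      exact mul_le_mul_of_nonneg_left hω hc.1.le
    show (1 - t) * ‖c • (ω : EuclideanSpace ℝ (Fin n))‖ ≤ (c • (ω : EuclideanSpace ℝ (Fin n))) 0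
    rw [hn]
    exact key
  · rintro ⟨h0, h1, hle⟩
    refine ⟨‖y‖, ⟨h0, h1⟩, ‖y‖⁻¹ • y, ⟨⟨‖y‖⁻¹ • y, ?_⟩, ?_, rfl⟩, ?_⟩
    · rw [mem_sphere_zero_iff_norm, norm_smul, Real.norm_eq_abs, abs_of_pos (inv_pos.mpr h0),
        inv_mul_cancel₀ h0.ne']
    · show 1 - t ≤ (‖y‖⁻¹ • y) 0
      have : (‖y‖⁻¹ • y) 0 = ‖y‖⁻¹ * y 0 := rfl
      rw [this, ← div_eq_inv_mul, le_div_iff₀ h0]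
      exact hle
    · show ‖y‖ • ‖y‖⁻¹ • y = y
      rw [smul_smul, mul_inv_cancel₀ h0.ne', one_smul]

/-- the measure of a cap `{ω₀ ≥ 1 - t}` is at most `C t^((n-1)/2)` -/
lemma cap_le (hn : 2 ≤ n) {t : ℝ} (ht : 0 < t) :
    (volume : Measure (EuclideanSpace ℝ (Fin n))).toSphere (capSet n t) ≤
      ENNReal.ofReal ((n : ℝ) * (2 * (2 * Real.sqrt 2) ^ (n - 1)) * t ^ pexp n) := by
  have hdim : Module.finrank ℝ (EuclideanSpace ℝ (Fin n)) = n := finrank_euclideanSpace_fin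
  rw [Measure.toSphere_apply' _ (capSet_measurable n t), hdim, sector_eq]
  set L : ℝ := Real.sqrt (2 * t) with hLdef
  have hL0 : 0 ≤ L := Real.sqrt_nonneg _
  -- the sector is inside a box
  have hsub : {y : EuclideanSpace ℝ (Fin n) | 0 < ‖y‖ ∧ ‖y‖ < 1 ∧ (1 - t) * ‖y‖ ≤ y 0} ⊆
      {y : EuclideanSpace ℝ (Fin n) |
        ∀ i, y i ∈ (fun i => if i = 0 then Icc (-1 : ℝ) 1 else Icc (-L) L) i} := by
    rintro y ⟨h0, h1, hle⟩ i
    by_cases hi : i = 0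
    · subst hi
      simp only [if_pos rfl, mem_Icc]
      have := coord_abs_le_norm n y 0
      constructor <;> [skip; skip] <;> cases' abs_le.mp (this.trans h1.le) with ha hb <;> linarith
    · simp only [if_neg hi, mem_Icc, ← abs_le]
      show |y i| ≤ L
      by_cases ht1 : t ≤ 1
      · -- small t: quantitative bound
        have hy0 : 0 ≤ y 0 := le_trans (mul_nonneg (by linarith) (norm_nonneg y)) hle
        have hsq : (y i) ^ 2 + (y 0) ^ 2 ≤ ‖y‖ ^ 2 := by
          rw [euclid_norm_sq]
          have : ({i, 0} : Finset (Fin n)) ⊆ Finset.univ := Finset.subset_univ _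
          calc (y i) ^ 2 + (y 0) ^ 2 = ∑ j ∈ ({i, 0} : Finset (Fin n)), (y j) ^ 2 := by
                rw [Finset.sum_pair hi]
            _ ≤ ∑ j, (y j) ^ 2 :=
                Finset.sum_le_sum_of_subset_of_nonneg this (fun j _ _ => sq_nonneg _)
        have hsq2 : ((1 - t) * ‖y‖) ^ 2 ≤ (y 0) ^ 2 := by
          have h1t : 0 ≤ (1 - t) * ‖y‖ := mul_nonneg (by linarith) (norm_nonneg y)
          exact pow_le_pow_left₀ h1t hle 2
        have hn1 : ‖y‖ ^ 2 ≤ 1 := by nlinarith [norm_nonneg y]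
        have hyi : (y i) ^ 2 ≤ 2 * t := by
          nlinarith [hsq, hsq2, hn1,
            mul_nonneg (mul_nonneg ht.le (by linarith : (0:ℝ) ≤ 2 - t))
              (by linarith : (0:ℝ) ≤ 1 - ‖y‖ ^ 2)]
        calc |y i| = Real.sqrt ((y i) ^ 2) := (Real.sqrt_sq_eq_abs _).symm
          _ ≤ L := Real.sqrt_le_sqrt hyi
      · -- large t: trivial bound
        push_neg at ht1
        have h2 : (1 : ℝ) ≤ L := by
          rw [hLdef, show (1:ℝ) = Real.sqrt 1 from (Real.sqrt_one).symm]
          exact Real.sqrt_le_sqrt (by linarith)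
        exact le_trans ((coord_abs_le_norm n y i).trans h1.le) h2
  refine le_trans (mul_le_mul_right (measure_mono hsub) _) ?_
  rw [euclidean_volume_box n _ (fun i => by by_cases hi : i = 0 <;> simp [hi, measurableSet_Icc])]
  rw [← Finset.mul_prod_erase Finset.univ _ (Finset.mem_univ (0 : Fin n))]
  rw [if_pos rfl]
  rw [Finset.prod_congr rfl (fun i hi => by rw [if_neg (Finset.ne_of_mem_erase hi)]),
    Finset.prod_const, Finset.card_erase_of_mem (Finset.mem_univ _), Finset.card_univ,
    Fintype.card_fin, Real.volume_Icc, Real.volume_Icc]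
  have h2 : (1 : ℝ) - (-1) = 2 := by norm_num
  have hLL : L - (-L) = 2 * L := by ring
  rw [h2, hLL, ← ENNReal.ofReal_pow (by positivity), ← ENNReal.ofReal_mul (by norm_num),
    ← ENNReal.ofReal_natCast n, ← ENNReal.ofReal_mul (by positivity)]
  apply ENNReal.ofReal_le_ofReal
  have hkey : (2 * L) ^ (n - 1) = (2 * Real.sqrt 2) ^ (n - 1) * t ^ pexp n := by
    have : 2 * L = (2 * Real.sqrt 2) * Real.sqrt t := by
      rw [hLdef, Real.sqrt_mul (by norm_num : (0:ℝ) ≤ 2)]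
      ring
    rw [this, mul_pow, sqrt_pow_cast n (by omega) ht.le]
  rw [hkey]
  ring_nf
  exact le_refl _

/-- the measure of a cap `{ω₀ ≥ 1 - t}` is at least `c t^((n-1)/2)` for `t ∈ (0,1]` -/
lemma le_cap (hn : 2 ≤ n) {t : ℝ} (ht : 0 < t) (ht1 : t ≤ 1) :
    ENNReal.ofReal ((n : ℝ) * ((1/4) * (1/(n:ℝ)) ^ (n - 1)) * t ^ pexp n) ≤
      (volume : Measure (EuclideanSpace ℝ (Fin n))).toSphere (capSet n t) := by
  have hdim : Module.finrank ℝ (EuclideanSpace ℝ (Fin n)) = n := finrank_euclideanSpace_fin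
  have hnpos : (0:ℝ) < n := by positivity
  rw [Measure.toSphere_apply' _ (capSet_measurable n t), hdim, sector_eq]
  set v : ℝ := Real.sqrt t / (2 * n) with hvdef
  have hv0 : 0 < v := by
    apply div_pos (Real.sqrt_pos.mpr ht)
    positivity
  have hsub : {y : EuclideanSpace ℝ (Fin n) |
        ∀ i, y i ∈ (fun i => if i = 0 then Icc (1/2 : ℝ) (3/4) else Icc (-v) v) i} ⊆
      {y : EuclideanSpace ℝ (Fin n) | 0 < ‖y‖ ∧ ‖y‖ < 1 ∧ (1 - t) * ‖y‖ ≤ y 0} := by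
    intro y hy
    have hy0 : y 0 ∈ Icc (1/2 : ℝ) (3/4) := by simpa using hy 0
    have hR : ∑ j ∈ Finset.univ.erase (0 : Fin n), (y j) ^ 2 ≤ t / 4 := by
      have hcard : (Finset.univ.erase (0 : Fin n)).card = n - 1 := by
        rw [Finset.card_erase_of_mem (Finset.mem_univ _), Finset.card_univ, Fintype.card_fin]
      have hterm : ∀ j ∈ Finset.univ.erase (0 : Fin n), (y j) ^ 2 ≤ v ^ 2 := by
        intro j hj
        have hj0 : j ≠ 0 := Finset.ne_of_mem_erase hj
        have := hy j
        simp only [if_neg hj0, mem_Icc] at this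
        nlinarith [this.1, this.2]
      calc ∑ j ∈ Finset.univ.erase (0 : Fin n), (y j) ^ 2
          ≤ ∑ _j ∈ Finset.univ.erase (0 : Fin n), v ^ 2 := Finset.sum_le_sum hterm
        _ = ((n : ℝ) - 1) * v ^ 2 := by
            rw [Finset.sum_const, hcard, nsmul_eq_mul, Nat.cast_sub (by omega)]
            norm_num
        _ ≤ t / 4 := by
            have hvsq : v ^ 2 = t / (4 * n ^ 2) := by
              rw [hvdef, div_pow, Real.sq_sqrt ht.le]
              ring
            have heq : ((n:ℝ) - 1) * (t / (4 * (n:ℝ) ^ 2)) = t * (((n:ℝ) - 1) / (n:ℝ) ^ 2) / 4 := by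
              field_simp
            rw [hvsq, heq]
            have h1 : ((n:ℝ) - 1) / (n:ℝ) ^ 2 ≤ 1 := by
              rw [div_le_one (by positivity)]
              nlinarith
            calc t * (((n:ℝ) - 1) / (n:ℝ) ^ 2) / 4 ≤ t * 1 / 4 := by
                  apply div_le_div_of_nonneg_right ?_ (by norm_num)
                  exact mul_le_mul_of_nonneg_left h1 ht.le
              _ = t / 4 := by ring
    have hnormsq : ‖y‖ ^ 2 = (y 0) ^ 2 + ∑ j ∈ Finset.univ.erase (0 : Fin n), (y j) ^ 2 := by
      rw [euclid_norm_sq]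
      exact (Finset.add_sum_erase _ _ (Finset.mem_univ (0 : Fin n))).symm
    have hRnn : 0 ≤ ∑ j ∈ Finset.univ.erase (0 : Fin n), (y j) ^ 2 :=
      Finset.sum_nonneg fun j _ => sq_nonneg _
    have habs : |y 0| ≤ ‖y‖ := coord_abs_le_norm n y 0
    have hyge : (1:ℝ)/2 ≤ ‖y‖ := le_trans (le_trans hy0.1 (le_abs_self _)) habs
    have hlt : ‖y‖ < 1 := by nlinarith [norm_nonneg y, hy0.1, hy0.2]
    refine ⟨by linarith, hlt, ?_⟩
    have hy025 : (0:ℝ) ≤ (y 0) ^ 2 - 1/4 := by nlinarith [hy0.1]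
    have hsq : ((1 - t) * ‖y‖) ^ 2 ≤ (y 0) ^ 2 := by
      have hexp : ((1 - t) * ‖y‖) ^ 2 =
          (1 - t) ^ 2 * ((y 0) ^ 2 + ∑ j ∈ Finset.univ.erase (0 : Fin n), (y j) ^ 2) := by
        rw [mul_pow, hnormsq]
      rw [hexp]
      nlinarith [hR, hRnn, ht.le, ht1,
        mul_nonneg (mul_nonneg ht.le (by linarith : (0:ℝ) ≤ 2 - t)) hRnn,
        mul_nonneg (mul_nonneg ht.le (by linarith : (0:ℝ) ≤ 2 - t)) hy025,
        mul_nonneg ht.le (by linarith : (0:ℝ) ≤ 1 - t)]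
    have h1t : 0 ≤ (1 - t) * ‖y‖ := mul_nonneg (by linarith) (norm_nonneg y)
    have hab : 0 < (1 - t) * ‖y‖ + y 0 := by linarith [hy0.1]
    nlinarith [hsq, hab, h1t]
  refine le_trans ?_ (mul_le_mul_right (measure_mono hsub) _)
  rw [euclidean_volume_box n _ (fun i => by by_cases hi : i = 0 <;> simp [hi, measurableSet_Icc])]
  rw [← Finset.mul_prod_erase Finset.univ _ (Finset.mem_univ (0 : Fin n))]
  rw [if_pos rfl]
  rw [Finset.prod_congr rfl (fun i hi => by rw [if_neg (Finset.ne_of_mem_erase hi)]),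
    Finset.prod_const, Finset.card_erase_of_mem (Finset.mem_univ _), Finset.card_univ,
    Fintype.card_fin, Real.volume_Icc, Real.volume_Icc]
  have h14 : (3:ℝ)/4 - 1/2 = 1/4 := by norm_num
  have hvv : v - (-v) = 2 * v := by ring
  rw [h14, hvv, ← ENNReal.ofReal_pow (by positivity), ← ENNReal.ofReal_mul (by norm_num),
    ← ENNReal.ofReal_natCast n, ← ENNReal.ofReal_mul (by positivity)]
  apply ENNReal.ofReal_le_ofReal
  have hkey : (2 * v) ^ (n - 1) = (1/(n:ℝ)) ^ (n - 1) * t ^ pexp n := by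
    have : 2 * v = (1/(n:ℝ)) * Real.sqrt t := by
      rw [hvdef]
      field_simp
    rw [this, mul_pow, sqrt_pow_cast n (by omega) ht.le]
  rw [hkey]
  ring_nf
  exact le_refl _


def sphereMap (e : Esp n ≃ₗᵢ[ℝ] Esp n) (ω : sphere (0 : Esp n) 1) : sphere (0 : Esp n) 1 :=
  ⟨e ω, by
    rw [mem_sphere_zero_iff_norm, e.norm_map]
    exact mem_sphere_zero_iff_norm.mp ω.2⟩

lemma sphereMap_continuous (e : Esp n ≃ₗᵢ[ℝ] Esp n) : Continuous (sphereMap n e) :=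
  Continuous.subtype_mk (e.continuous.comp continuous_subtype_val) _

lemma toSphere_map_eq (e : Esp n ≃ₗᵢ[ℝ] Esp n) :
    Measure.map (sphereMap n e) (volume : Measure (Esp n)).toSphere =
      (volume : Measure (Esp n)).toSphere := by
  ext s hs
  rw [Measure.map_apply ((sphereMap_continuous n e).measurable) hs]
  rw [Measure.toSphere_apply' _ (hs.preimage (sphereMap_continuous n e).measurable),
    Measure.toSphere_apply' _ hs]
  congr 1
  have hset : Subtype.val '' (sphereMap n e ⁻¹' s) = e.symm '' (Subtype.val '' s) := by
    ext z
    constructor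
    · rintro ⟨ω, hω, rfl⟩
      exact ⟨e ω, ⟨sphereMap n e ω, hω, rfl⟩, by simp⟩
    · rintro ⟨w, ⟨σ, hσ, rfl⟩, rfl⟩
      have hmem : e.symm (σ : Esp n) ∈ sphere (0 : Esp n) 1 := by
        rw [mem_sphere_zero_iff_norm, e.symm.norm_map]
        exact mem_sphere_zero_iff_norm.mp σ.2
      refine ⟨⟨e.symm σ, hmem⟩, ?_, rfl⟩
      show sphereMap n e ⟨e.symm σ, hmem⟩ ∈ s
      have heq : sphereMap n e ⟨e.symm σ, hmem⟩ = σ := by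
        apply Subtype.ext
        show e (e.symm σ) = σ
        simp
      rw [heq]
      exact hσ
  rw [hset]
  have hsmul : Set.Ioo (0:ℝ) 1 • (e.symm '' (Subtype.val '' s)) =
      e.symm '' (Set.Ioo (0:ℝ) 1 • (Subtype.val '' s)) := by
    ext z
    constructor
    · rintro ⟨c, hc, w, ⟨a, ha, rfl⟩, rfl⟩
      exact ⟨c • a, ⟨c, hc, a, ha, rfl⟩, by simp [_root_.map_smul]⟩
    · rintro ⟨w, ⟨c, hc, a, ha, rfl⟩, rfl⟩
      exact ⟨c, hc, e.symm a, ⟨a, ha, rfl⟩, by simp [_root_.map_smul]⟩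
  rw [hsmul]
  have himg : e.symm '' (Set.Ioo (0:ℝ) 1 • (Subtype.val '' s)) =
      e ⁻¹' (Set.Ioo (0:ℝ) 1 • (Subtype.val '' s)) := by
    ext z
    constructor
    · rintro ⟨w, hw, rfl⟩
      simp only [Set.mem_preimage, LinearIsometryEquiv.apply_symm_apply]
      exact hw
    · intro hz
      exact ⟨e z, hz, by simp⟩
  rw [himg]
  have hme : MeasurableEmbedding (⇑e : Esp n → Esp n) := e.toHomeomorph.measurableEmbedding
  rw [← hme.map_apply volume (Set.Ioo (0:ℝ) 1 • (Subtype.val '' s)),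
    e.measurePreserving.map_eq]

lemma exp_inner_integrable (x : Esp n) :
    Integrable (fun ω : sphere (0 : Esp n) 1 => Real.exp (inner ℝ x (ω : Esp n)))
      (volume : Measure (Esp n)).toSphere := by
  have hcont : Continuous fun ω : sphere (0 : Esp n) 1 => Real.exp (inner ℝ x (ω : Esp n)) :=
    (continuous_const.inner continuous_subtype_val).rexp
  apply (integrable_const (Real.exp ‖x‖)).mono' hcont.aestronglyMeasurable
  apply Filter.Eventually.of_forall
  intro ω
  rw [Real.norm_eq_abs, abs_of_pos (Real.exp_pos _), Real.exp_le_exp]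
  calc inner ℝ x (ω : Esp n) ≤ ‖x‖ * ‖(ω : Esp n)‖ := real_inner_le_norm x _
    _ = ‖x‖ := by rw [mem_sphere_zero_iff_norm.mp ω.2, mul_one]

lemma inner_eq_radial (x : Esp n) (hx : x ≠ 0) :
    ∫ ω : sphere (0 : Esp n) 1, Real.exp (inner ℝ x (ω : Esp n))
        ∂(volume : Measure (Esp n)).toSphere =
      ∫ ω : sphere (0 : Esp n) 1, Real.exp (‖x‖ * (ω : Esp n) 0)
        ∂(volume : Measure (Esp n)).toSphere := by
  set u : Esp n := ‖x‖⁻¹ • x with hu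
  have hxpos : (0:ℝ) < ‖x‖ := norm_pos_iff.mpr hx
  have hun : ‖u‖ = 1 := by
    rw [hu, norm_smul, Real.norm_eq_abs, abs_of_pos (inv_pos.mpr hxpos),
      inv_mul_cancel₀ hxpos.ne']
  set e₀ : Esp n := EuclideanSpace.single (0 : Fin n) (1:ℝ) with he₀
  have he₀n : ‖e₀‖ = 1 := by
    rw [he₀, EuclideanSpace.norm_single, norm_one]
  set e : Esp n ≃ₗᵢ[ℝ] Esp n := Submodule.reflection (ℝ ∙ (e₀ - u))ᗮ with he
  have hee : e e₀ = u := Submodule.reflection_sub (by rw [he₀n, hun])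
  have hmap := toSphere_map_eq n e
  nth_rewrite 1 [← hmap]
  rw [integral_map (sphereMap_continuous n e).aemeasurable
    ((continuous_const.inner continuous_subtype_val).rexp).aestronglyMeasurable]
  · apply integral_congr_ae
    apply Filter.Eventually.of_forall
    intro ω
    show Real.exp (inner ℝ x (e (ω : Esp n))) = _
    have hx_eq : x = ‖x‖ • u := by
      rw [hu, smul_smul, mul_inv_cancel₀ hxpos.ne', one_smul]
    have : (inner ℝ x (e (ω : Esp n)) : ℝ) = ‖x‖ * inner ℝ (e e₀) (e (ω : Esp n)) := by
      rw [hee, ← real_inner_smul_left, ← hx_eq]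
    rw [this, e.inner_map_map]
    congr 2
    rw [he₀]
    have := EuclideanSpace.inner_single_left (0 : Fin n) (1:ℝ) (ω : Esp n)
    rw [this]
    simp

set_option linter.unusedSectionVars false

lemma exp_coord_integrable (r : ℝ) :
    Integrable (fun ω : sphere (0 : Esp n) 1 => Real.exp (r * (ω : Esp n) 0))
      (volume : Measure (Esp n)).toSphere := by
  have hcont : Continuous fun ω : sphere (0 : Esp n) 1 => Real.exp (r * (ω : Esp n) 0) := by
    apply Real.continuous_exp.comp
    exact continuous_const.mul
      ((EuclideanSpace.proj (0 : Fin n)).continuous.comp continuous_subtype_val)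
  apply (integrable_const (Real.exp |r|)).mono' hcont.aestronglyMeasurable
  apply Filter.Eventually.of_forall
  intro ω
  rw [Real.norm_eq_abs, abs_of_pos (Real.exp_pos _), Real.exp_le_exp]
  have h1 : |(ω : Esp n) 0| ≤ 1 := by
    calc |(ω : Esp n) 0| ≤ ‖(ω : Esp n)‖ := coord_abs_le_norm n _ 0
      _ = 1 := mem_sphere_zero_iff_norm.mp ω.2
  calc r * (ω : Esp n) 0 ≤ |r * (ω : Esp n) 0| := le_abs_self _
    _ = |r| * |(ω : Esp n) 0| := abs_mul _ _
    _ ≤ |r| * 1 := mul_le_mul_of_nonneg_left h1 (abs_nonneg r)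
    _ = |r| := mul_one _

lemma g_lower (hn : 2 ≤ n) {r : ℝ} (hr : 0 ≤ r) :
    ((n : ℝ) * ((1/4) * (1/(n:ℝ)) ^ (n - 1)) / Real.exp 1) * (1 + r) ^ (-(pexp n)) *
        Real.exp r ≤
      ∫ ω : sphere (0 : Esp n) 1, Real.exp (r * (ω : Esp n) 0)
        ∂(volume : Measure (Esp n)).toSphere := by
  set cl : ℝ := (n : ℝ) * ((1/4) * (1/(n:ℝ)) ^ (n - 1)) with hcl
  have hclpos : 0 < cl := by
    rw [hcl]
    have : (0:ℝ) < n := by positivity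
    positivity
  set t : ℝ := 1/(1+r) with htdef
  have h1r : (0:ℝ) < 1 + r := by linarith
  have ht : 0 < t := by positivity
  have ht1 : t ≤ 1 := by
    rw [htdef, div_le_one h1r]
    linarith
  have hκ := le_cap n hn ht ht1
  have hfin : (volume : Measure (Esp n)).toSphere (capSet n t) ≠ ⊤ := measure_ne_top _ _
  have h3 : cl * t ^ pexp n ≤ ((volume : Measure (Esp n)).toSphere (capSet n t)).toReal :=
    (ENNReal.ofReal_le_iff_le_toReal hfin).mp hκ
  have hint := exp_coord_integrable n r
  have hrt : r * t ≤ 1 := by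
    rw [htdef, mul_one_div, div_le_one h1r]
    linarith
  have htp : t ^ pexp n = (1 + r) ^ (-(pexp n)) := by
    rw [Real.rpow_neg h1r.le, ← Real.inv_rpow h1r.le, htdef, one_div]
  have h4 : Real.exp (r - 1) ≤ Real.exp (r * (1 - t)) := by
    rw [Real.exp_le_exp]
    nlinarith
  calc cl / Real.exp 1 * (1 + r) ^ (-(pexp n)) * Real.exp r
      = cl * t ^ pexp n * Real.exp (r - 1) := by
        rw [htp, Real.exp_sub]
        ring
    _ ≤ ((volume : Measure (Esp n)).toSphere (capSet n t)).toReal *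
          Real.exp (r * (1 - t)) :=
        mul_le_mul h3 h4 (Real.exp_pos _).le ENNReal.toReal_nonneg
    _ = ∫ _ω in capSet n t, Real.exp (r * (1 - t))
          ∂(volume : Measure (Esp n)).toSphere := by
        rw [setIntegral_const, smul_eq_mul, measureReal_def]
    _ ≤ ∫ ω in capSet n t, Real.exp (r * (ω : Esp n) 0)
          ∂(volume : Measure (Esp n)).toSphere := by
        apply setIntegral_mono_on (integrable_const _).integrableOn hint.integrableOn
          (capSet_measurable n t)
        intro ω hω
        rw [Real.exp_le_exp]
        exact mul_le_mul_of_nonneg_left hω hr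
    _ ≤ ∫ ω : sphere (0 : Esp n) 1, Real.exp (r * (ω : Esp n) 0)
          ∂(volume : Measure (Esp n)).toSphere :=
        setIntegral_le_integral hint
          (Filter.Eventually.of_forall fun ω => (Real.exp_pos _).le)


lemma neg_log_rpow_le (hn : 2 ≤ n) {s : ℝ} (hs : 0 < s) (hs1 : s < 1) :
    (-Real.log s) ^ pexp n ≤ 1 + ((n.factorial : ℝ) * 2 ^ n) * s ^ (-(1/2) : ℝ) := by
  set w : ℝ := -Real.log s with hw
  have hwpos : 0 < w := by
    rw [hw]
    simp only [neg_pos]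
    exact Real.log_neg hs hs1
  have hp0 : 0 ≤ pexp n := by
    rw [pexp]
    have : (2:ℝ) ≤ n := by exact_mod_cast hn
    linarith
  have hsrw : s ^ (-(1/2) : ℝ) = Real.exp (w / 2) := by
    rw [Real.rpow_def_of_pos hs, hw]
    congr 1
    ring
  have hKpos : (0:ℝ) < (n.factorial : ℝ) * 2 ^ n := by positivity
  by_cases hw1 : w ≤ 1
  · have h1 : w ^ pexp n ≤ 1 := Real.rpow_le_one hwpos.le hw1 hp0
    have h2 : 0 ≤ ((n.factorial : ℝ) * 2 ^ n) * s ^ (-(1/2) : ℝ) := by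
      rw [hsrw]; positivity
    linarith
  · push_neg at hw1
    have h1 : w ^ pexp n ≤ w ^ (n : ℝ) := by
      apply Real.rpow_le_rpow_of_exponent_le hw1.le
      rw [pexp]
      have : (2:ℝ) ≤ n := by exact_mod_cast hn
      linarith
    have h2 : w ^ (n : ℝ) = w ^ n := Real.rpow_natCast w n
    have h3 : w ^ n ≤ (n.factorial : ℝ) * 2 ^ n * Real.exp (w / 2) := by
      have hsum : (w / 2) ^ n / (n.factorial : ℝ) ≤ Real.exp (w / 2) := by
        calc (w / 2) ^ n / (n.factorial : ℝ)
            ≤ ∑ i ∈ Finset.range (n + 1), (w / 2) ^ i / (i.factorial : ℝ) := by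
              apply Finset.single_le_sum (f := fun i => (w / 2) ^ i / (i.factorial : ℝ))
                (fun i _ => by positivity) (Finset.self_mem_range_succ n)
          _ ≤ Real.exp (w / 2) := Real.sum_le_exp_of_nonneg (by linarith) (n + 1)
      have hfac : (0:ℝ) < (n.factorial : ℝ) := by positivity
      rw [div_le_iff₀ hfac] at hsum
      calc w ^ n = 2 ^ n * (w / 2) ^ n := by
            rw [← mul_pow]
            congr 1
            ring
        _ ≤ 2 ^ n * ((Real.exp (w / 2)) * (n.factorial : ℝ)) :=
            mul_le_mul_of_nonneg_left hsum (by positivity)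
        _ = (n.factorial : ℝ) * 2 ^ n * Real.exp (w / 2) := by ring
    rw [hsrw]
    nlinarith [Real.exp_pos (w / 2)]

lemma g_upper_main (hn : 2 ≤ n) {r : ℝ} (hr : 1 ≤ r) :
    ∫ ω : sphere (0 : Esp n) 1, Real.exp (r * (ω : Esp n) 0)
        ∂(volume : Measure (Esp n)).toSphere ≤
      ((n : ℝ) * (2 * (2 * Real.sqrt 2) ^ (n - 1)) *
          (∫ s in Set.Ioo (0:ℝ) 1, (1 + ((n.factorial : ℝ) * 2 ^ n) * s ^ (-(1/2) : ℝ))) *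
          2 ^ pexp n) *
        (1 + r) ^ (-(pexp n)) * Real.exp r := by
  have hr0 : (0:ℝ) < r := by linarith
  set CU : ℝ := (n : ℝ) * (2 * (2 * Real.sqrt 2) ^ (n - 1)) with hCU
  have hCU0 : 0 ≤ CU := by rw [hCU]; positivity
  set K : ℝ := (n.factorial : ℝ) * 2 ^ n with hK
  have hK0 : 0 ≤ K := by rw [hK]; positivity
  set ψ : ℝ → ℝ := fun s => 1 + K * s ^ (-(1/2) : ℝ) with hψ
  set J : ℝ := ∫ s in Set.Ioo (0:ℝ) 1, ψ s with hJ
  have hp0 : 0 ≤ pexp n := by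
    rw [pexp]
    have : (2:ℝ) ≤ n := by exact_mod_cast hn
    linarith
  have hrp : (0:ℝ) < r ^ pexp n := Real.rpow_pos_of_pos hr0 _
  have hψnn : ∀ s : ℝ, 0 < s → 0 ≤ ψ s := by
    intro s hs
    have h0 : 0 ≤ s ^ (-(1/2) : ℝ) := Real.rpow_nonneg hs.le _
    rw [hψ]
    dsimp only
    nlinarith [mul_nonneg hK0 h0]
  have hψint : IntegrableOn ψ (Set.Ioo (0:ℝ) 1) volume := by
    apply Integrable.add (integrable_const 1)
    apply Integrable.const_mul
    have h1 : IntervalIntegrable (fun s : ℝ => s ^ (-(1/2) : ℝ)) volume 0 1 :=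
      intervalIntegral.intervalIntegrable_rpow' (by norm_num)
    have h2 : IntegrableOn (fun s : ℝ => s ^ (-(1/2) : ℝ)) (Set.Ioc (0:ℝ) 1) volume :=
      (intervalIntegrable_iff_integrableOn_Ioc_of_le (by norm_num)).mp h1
    exact h2.mono_set Set.Ioo_subset_Ioc_self
  have hJ0 : 0 ≤ J := by
    rw [hJ]
    exact setIntegral_nonneg measurableSet_Ioo fun s hs => hψnn s hs.1
  set h : sphere (0 : Esp n) 1 → ℝ :=
    fun ω => Real.exp (r * (ω : Esp n) 0) * Real.exp (-r) with hh
  have hint : Integrable h ((volume : Measure (Esp n)).toSphere) :=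
    (exp_coord_integrable n r).mul_const _
  have hmeas : AEStronglyMeasurable h ((volume : Measure (Esp n)).toSphere) :=
    hint.aestronglyMeasurable
  have hnn : 0 ≤ᵐ[(volume : Measure (Esp n)).toSphere] h :=
    Filter.Eventually.of_forall fun ω => by positivity
  have hlayer := lintegral_eq_lintegral_meas_lt ((volume : Measure (Esp n)).toSphere)
    hnn hmeas.aemeasurable
  have hcapbd : ∀ s : ℝ, s ∈ Set.Ioi (0:ℝ) →
      ((volume : Measure (Esp n)).toSphere {a | s < h a}) ≤
        (Set.Ioo (0:ℝ) 1).indicator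
          (fun s => ENNReal.ofReal (CU / r ^ pexp n * ψ s)) s := by
    intro s hs
    rw [Set.mem_Ioi] at hs
    by_cases hs1 : s < 1
    · rw [Set.indicator_of_mem (show s ∈ Set.Ioo (0:ℝ) 1 from ⟨hs, hs1⟩)]
      set u : ℝ := (-Real.log s) / r with hu
      have hlogneg : Real.log s < 0 := Real.log_neg hs hs1
      have hupos : 0 < u := div_pos (by linarith) hr0
      have hru : r * u = -Real.log s := by
        rw [hu]
        field_simp
      have hsub : {a : sphere (0 : Esp n) 1 | s < h a} ⊆ capSet n u := by
        intro ω hω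
        simp only [Set.mem_setOf_eq, hh] at hω
        rw [← Real.exp_add] at hω
        have hlt : Real.log s < r * (ω : Esp n) 0 + -r :=
          (Real.log_lt_iff_lt_exp hs).mpr hω
        show 1 - u ≤ (ω : Esp n) 0
        have hmul : r * (1 - u) < r * (ω : Esp n) 0 := by
          rw [mul_sub, hru]
          linarith
        have := (mul_lt_mul_iff_right₀ hr0).mp hmul
        linarith
      calc (volume : Measure (Esp n)).toSphere {a | s < h a}
          ≤ (volume : Measure (Esp n)).toSphere (capSet n u) := measure_mono hsub
        _ ≤ ENNReal.ofReal (CU * u ^ pexp n) := cap_le n hn hupos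
        _ ≤ ENNReal.ofReal (CU / r ^ pexp n * ψ s) := by
            apply ENNReal.ofReal_le_ofReal
            have hdiv : u ^ pexp n = (-Real.log s) ^ pexp n / r ^ pexp n := by
              rw [hu, Real.div_rpow (by linarith) hr0.le]
            rw [hdiv]
            have hbd := neg_log_rpow_le n hn hs hs1
            calc CU * ((-Real.log s) ^ pexp n / r ^ pexp n)
                = CU / r ^ pexp n * (-Real.log s) ^ pexp n := by ring
              _ ≤ CU / r ^ pexp n * ψ s := by
                  apply mul_le_mul_of_nonneg_left _ (by positivity)
                  exact hbd
    · push_neg at hs1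
      have hempty : {a : sphere (0 : Esp n) 1 | s < h a} = ∅ := by
        ext ω
        simp only [Set.mem_setOf_eq, Set.mem_empty_iff_false, iff_false, not_lt, hh]
        rw [← Real.exp_add]
        have hω1 : (ω : Esp n) 0 ≤ 1 := by
          calc (ω : Esp n) 0 ≤ |(ω : Esp n) 0| := le_abs_self _
            _ ≤ ‖(ω : Esp n)‖ := coord_abs_le_norm n _ 0
            _ = 1 := mem_sphere_zero_iff_norm.mp ω.2
        calc Real.exp (r * (ω : Esp n) 0 + -r) ≤ Real.exp 0 := by
              rw [Real.exp_le_exp]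
              nlinarith
          _ = 1 := Real.exp_zero
          _ ≤ s := hs1
      rw [hempty, Set.indicator_apply]
      simp
  have hlint : ∫⁻ ω, ENNReal.ofReal (h ω) ∂(volume : Measure (Esp n)).toSphere ≤
      ENNReal.ofReal (CU / r ^ pexp n * J) := by
    rw [hlayer]
    calc ∫⁻ s in Set.Ioi (0:ℝ), (volume : Measure (Esp n)).toSphere {a | s < h a}
        ≤ ∫⁻ s in Set.Ioi (0:ℝ), (Set.Ioo (0:ℝ) 1).indicator
            (fun s => ENNReal.ofReal (CU / r ^ pexp n * ψ s)) s :=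
          setLIntegral_mono' measurableSet_Ioi hcapbd
      _ = ∫⁻ s in Set.Ioo (0:ℝ) 1, ENNReal.ofReal (CU / r ^ pexp n * ψ s) := by
          rw [lintegral_indicator measurableSet_Ioo,
            Measure.restrict_restrict measurableSet_Ioo,
            Set.inter_eq_left.mpr (fun x hx => hx.1)]
      _ = ENNReal.ofReal (∫ s in Set.Ioo (0:ℝ) 1, CU / r ^ pexp n * ψ s) := by
          rw [ofReal_integral_eq_lintegral_ofReal (hψint.const_mul _)]
          apply (ae_restrict_iff' measurableSet_Ioo).mpr
          apply Filter.Eventually.of_forall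
          intro s hs
          exact mul_nonneg (by positivity) (hψnn s hs.1)
      _ = ENNReal.ofReal (CU / r ^ pexp n * J) := by
          congr 1
          rw [hJ, MeasureTheory.integral_const_mul]
  have hIh : ∫ ω, h ω ∂(volume : Measure (Esp n)).toSphere ≤ CU / r ^ pexp n * J := by
    rw [integral_eq_lintegral_of_nonneg_ae hnn hmeas]
    calc (∫⁻ ω, ENNReal.ofReal (h ω) ∂(volume : Measure (Esp n)).toSphere).toReal
        ≤ (ENNReal.ofReal (CU / r ^ pexp n * J)).toReal :=
          ENNReal.toReal_mono ENNReal.ofReal_ne_top hlint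
      _ = CU / r ^ pexp n * J := ENNReal.toReal_ofReal (by positivity)
  have hsplit : ∫ ω : sphere (0 : Esp n) 1, Real.exp (r * (ω : Esp n) 0)
      ∂(volume : Measure (Esp n)).toSphere =
      Real.exp r * ∫ ω, h ω ∂(volume : Measure (Esp n)).toSphere := by
    rw [hh, integral_mul_const, ← mul_assoc, mul_comm (Real.exp r), mul_assoc,
      ← Real.exp_add]
    simp
  rw [hsplit]
  have hcmp : (r ^ pexp n)⁻¹ ≤ 2 ^ pexp n * (1 + r) ^ (-(pexp n)) := by
    have h2r : (1 + r) ^ pexp n ≤ 2 ^ pexp n * r ^ pexp n := by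
      rw [← Real.mul_rpow (by norm_num) hr0.le]
      exact Real.rpow_le_rpow (by linarith) (by linarith) hp0
    have h1r : (0:ℝ) < (1 + r) ^ pexp n := Real.rpow_pos_of_pos (by linarith) _
    rw [Real.rpow_neg (by linarith : (0:ℝ) ≤ 1 + r)]
    have h2p : (0:ℝ) < 2 ^ pexp n := Real.rpow_pos_of_pos two_pos _
    have hmono : ((2:ℝ) ^ pexp n * r ^ pexp n)⁻¹ ≤ ((1 + r) ^ pexp n)⁻¹ :=
      inv_anti₀ h1r h2r
    calc (r ^ pexp n)⁻¹ = 2 ^ pexp n * ((2:ℝ) ^ pexp n * r ^ pexp n)⁻¹ := by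
          field_simp
      _ ≤ 2 ^ pexp n * ((1 + r) ^ pexp n)⁻¹ := mul_le_mul_of_nonneg_left hmono h2p.le
  have hfinal : ∫ ω, h ω ∂(volume : Measure (Esp n)).toSphere ≤
      CU * J * 2 ^ pexp n * (1 + r) ^ (-(pexp n)) := by
    calc ∫ ω, h ω ∂(volume : Measure (Esp n)).toSphere
        ≤ CU / r ^ pexp n * J := hIh
      _ = CU * J * (r ^ pexp n)⁻¹ := by ring
      _ ≤ CU * J * (2 ^ pexp n * (1 + r) ^ (-(pexp n))) :=
          mul_le_mul_of_nonneg_left hcmp (mul_nonneg hCU0 hJ0)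
      _ = CU * J * 2 ^ pexp n * (1 + r) ^ (-(pexp n)) := by ring
  calc Real.exp r * ∫ ω, h ω ∂(volume : Measure (Esp n)).toSphere
      ≤ Real.exp r * (CU * J * 2 ^ pexp n * (1 + r) ^ (-(pexp n))) :=
        mul_le_mul_of_nonneg_left hfinal (Real.exp_pos r).le
    _ = CU * J * 2 ^ pexp n * (1 + r) ^ (-(pexp n)) * Real.exp r := by ring

lemma g_upper_small (hn : 2 ≤ n) {r : ℝ} (hr0 : 0 ≤ r) (hr1 : r ≤ 1) :
    ∫ ω : sphere (0 : Esp n) 1, Real.exp (r * (ω : Esp n) 0)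
        ∂(volume : Measure (Esp n)).toSphere ≤
      (Real.exp 1 * ((volume : Measure (Esp n)).toSphere Set.univ).toReal * 2 ^ pexp n) *
        (1 + r) ^ (-(pexp n)) * Real.exp r := by
  set M : ℝ := ((volume : Measure (Esp n)).toSphere Set.univ).toReal with hM
  have hM0 : 0 ≤ M := ENNReal.toReal_nonneg
  have hp0 : 0 ≤ pexp n := by
    rw [pexp]
    have : (2:ℝ) ≤ n := by exact_mod_cast hn
    linarith
  have hstep : ∫ ω : sphere (0 : Esp n) 1, Real.exp (r * (ω : Esp n) 0)
      ∂(volume : Measure (Esp n)).toSphere ≤ Real.exp 1 * M := by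
    calc ∫ ω : sphere (0 : Esp n) 1, Real.exp (r * (ω : Esp n) 0)
        ∂(volume : Measure (Esp n)).toSphere
        ≤ ∫ _ω : sphere (0 : Esp n) 1, Real.exp 1
            ∂(volume : Measure (Esp n)).toSphere := by
          apply integral_mono (exp_coord_integrable n r) (integrable_const _)
          intro ω
          rw [Real.exp_le_exp]
          have hω1 : (ω : Esp n) 0 ≤ 1 := by
            calc (ω : Esp n) 0 ≤ |(ω : Esp n) 0| := le_abs_self _
              _ ≤ ‖(ω : Esp n)‖ := coord_abs_le_norm n _ 0
              _ = 1 := mem_sphere_zero_iff_norm.mp ω.2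
          nlinarith
      _ = Real.exp 1 * M := by
          rw [integral_const, smul_eq_mul, measureReal_def, hM, mul_comm]
  have ha : (2:ℝ) ^ (-(pexp n)) ≤ (1 + r) ^ (-(pexp n)) := by
    rw [Real.rpow_neg (by norm_num : (0:ℝ) ≤ 2), Real.rpow_neg (by linarith : (0:ℝ) ≤ 1 + r)]
    exact inv_anti₀ (Real.rpow_pos_of_pos (by linarith) _)
      (Real.rpow_le_rpow (by linarith) (by linarith) hp0)
  have hb : (1:ℝ) ≤ Real.exp r := by
    calc (1:ℝ) = Real.exp 0 := Real.exp_zero.symm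
      _ ≤ Real.exp r := Real.exp_le_exp.mpr hr0
  have hC0 : 0 ≤ Real.exp 1 * M * 2 ^ pexp n :=
    mul_nonneg (mul_nonneg (Real.exp_pos 1).le hM0) (Real.rpow_pos_of_pos two_pos _).le
  calc ∫ ω : sphere (0 : Esp n) 1, Real.exp (r * (ω : Esp n) 0)
      ∂(volume : Measure (Esp n)).toSphere
      ≤ Real.exp 1 * M := hstep
    _ = Real.exp 1 * M * 2 ^ pexp n * (2:ℝ) ^ (-(pexp n)) * 1 := by
        rw [Real.rpow_neg (by norm_num : (0:ℝ) ≤ 2)]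
        have h2p : ((2:ℝ) ^ pexp n) ≠ 0 := (Real.rpow_pos_of_pos two_pos _).ne'
        field_simp
    _ ≤ Real.exp 1 * M * 2 ^ pexp n * (1 + r) ^ (-(pexp n)) * Real.exp r := by
        apply mul_le_mul (mul_le_mul_of_nonneg_left ha hC0) hb (by norm_num) ?_
        exact mul_nonneg hC0 (Real.rpow_pos_of_pos (by linarith) _).le

end SphereAsymp

theorem sphere_average_asymptotics (n : ℕ) (hn : 2 ≤ n)
    (phi : EuclideanSpace ℝ (Fin n) → ℝ)
    (hphi : ∀ x, phi x =
      ∫ ω : Metric.sphere (0 : EuclideanSpace ℝ (Fin n)) 1,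
        Real.exp (inner ℝ x (ω : EuclideanSpace ℝ (Fin n)))
        ∂(volume : Measure (EuclideanSpace ℝ (Fin n))).toSphere) :
    ∃ c C : ℝ, 0 < c ∧ c ≤ C ∧ ∀ x : EuclideanSpace ℝ (Fin n),
      c * (1 + ‖x‖) ^ (-(((n : ℝ) - 1) / 2)) * Real.exp ‖x‖ ≤ phi x ∧
      phi x ≤ C * (1 + ‖x‖) ^ (-(((n : ℝ) - 1) / 2)) * Real.exp ‖x‖ := by
  haveI : NeZero n := ⟨by omega⟩
  set c : ℝ := (n : ℝ) * ((1/4) * (1/(n:ℝ)) ^ (n - 1)) / Real.exp 1 with hc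
  have hnpos : (0:ℝ) < n := by
    have : 0 < n := by omega
    exact_mod_cast this
  have hcpos : 0 < c := by
    rw [hc]
    positivity
  set C1 : ℝ := Real.exp 1 * ((volume : Measure (Esp n)).toSphere Set.univ).toReal *
    2 ^ pexp n with hC1
  set C2 : ℝ := (n : ℝ) * (2 * (2 * Real.sqrt 2) ^ (n - 1)) *
    (∫ s in Set.Ioo (0:ℝ) 1, (1 + ((n.factorial : ℝ) * 2 ^ n) * s ^ (-(1/2) : ℝ))) *
    2 ^ pexp n with hC2
  set C : ℝ := max (max C1 C2) c with hC
  refine ⟨c, C, hcpos, le_max_right _ _, ?_⟩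
  intro x
  set r : ℝ := ‖x‖ with hrdef
  have hr0 : 0 ≤ r := norm_nonneg x
  have hpe : -(pexp n) = -(((n : ℝ) - 1) / 2) := rfl
  have hA0 : 0 ≤ (1 + r) ^ (-(pexp n)) * Real.exp r :=
    mul_nonneg (Real.rpow_pos_of_pos (by linarith) _).le (Real.exp_pos _).le
  have hmax : ∀ B : ℝ, B ≤ C → B * (1 + r) ^ (-(pexp n)) * Real.exp r ≤
      C * (1 + r) ^ (-(pexp n)) * Real.exp r := by
    intro B hB
    apply mul_le_mul_of_nonneg_right _ (Real.exp_pos r).le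
    exact mul_le_mul_of_nonneg_right hB (Real.rpow_pos_of_pos (by linarith) _).le
  have hrad : phi x = ∫ ω : Metric.sphere (0 : EuclideanSpace ℝ (Fin n)) 1,
      Real.exp (r * (ω : EuclideanSpace ℝ (Fin n)) 0)
      ∂(volume : Measure (EuclideanSpace ℝ (Fin n))).toSphere := by
    rw [hphi]
    by_cases hx : x = 0
    · subst hx
      simp only [norm_zero]
      apply integral_congr_ae
      apply Filter.Eventually.of_forall
      intro ω
      rw [show r = ‖(0 : EuclideanSpace ℝ (Fin n))‖ from hrdef]
      simp
    · rw [inner_eq_radial n x hx]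
  constructor
  · rw [hrad, ← hpe]
    exact g_lower n hn hr0
  · rw [hrad, ← hpe]
    by_cases hr1 : r ≤ 1
    · calc ∫ ω : Metric.sphere (0 : EuclideanSpace ℝ (Fin n)) 1,
          Real.exp (r * (ω : EuclideanSpace ℝ (Fin n)) 0)
          ∂(volume : Measure (EuclideanSpace ℝ (Fin n))).toSphere
          ≤ C1 * (1 + r) ^ (-(pexp n)) * Real.exp r := g_upper_small n hn hr0 hr1
        _ ≤ C * (1 + r) ^ (-(pexp n)) * Real.exp r :=
            hmax C1 (le_trans (le_max_left _ _) (le_max_left _ _))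
    · push_neg at hr1
      calc ∫ ω : Metric.sphere (0 : EuclideanSpace ℝ (Fin n)) 1,
          Real.exp (r * (ω : EuclideanSpace ℝ (Fin n)) 0)
          ∂(volume : Measure (EuclideanSpace ℝ (Fin n))).toSphere
          ≤ C2 * (1 + r) ^ (-(pexp n)) * Real.exp r := g_upper_main n hn hr1.le
        _ ≤ C * (1 + r) ^ (-(pexp n)) * Real.exp r :=
            hmax C2 (le_trans (le_max_right _ _) (le_max_left _ _))
end
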